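/- arXiv:2004.01337 — 11 statements merged into one kernel-verified Lean document; each statement's English description precedes it below -/
import Mathlib

section
/- Let n ≥ 1 and let x, y be permutations of {1,...,n}. Then x ≤ y in the Bruhat order of the symmetric group S_n if and only if x[i,j] ≤ y[i,j] for all 1 ≤ i, j ≤ n. -/
/-- For a permutation `w` of `{1,...,n}` (encoded on `Fin n`, with `k : Fin n`
representing the number `k+1`), `entryA w i j = #{1 ≤ k ≤ i : w(k) ≥ j}`. -/
def entryA {n : ℕ} (w : Equiv.Perm (Fin n)) (i j : ℕ) : ℕ :=
  (Finset.univ.filter (fun k : Fin n => (k : ℕ) + 1 ≤ i ∧ j ≤ (w k : ℕ) + 1)).card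

/-- `inv(w) = #{1 ≤ i < j ≤ n : w(i) > w(j)}`. -/
def invA {n : ℕ} (w : Equiv.Perm (Fin n)) : ℕ :=
  (Finset.univ.filter (fun p : Fin n × Fin n => p.1 < p.2 ∧ w p.2 < w p.1)).card

/-- The Bruhat order on `S_n`: the reflexive–transitive closure of
`x → x·t` where `t` is a transposition and `inv(x·t) > inv(x)`. -/
def BruhatA {n : ℕ} (x y : Equiv.Perm (Fin n)) : Prop :=
  Relation.ReflTransGen
    (fun u v => ∃ a b : Fin n, a ≠ b ∧ v = u * Equiv.swap a b ∧ invA u < invA v) x y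


section BruhatProof

variable {n : ℕ}

lemma entryA_eq_sum (w : Equiv.Perm (Fin n)) (i j : ℕ) :
    entryA w i j = ∑ k : Fin n, if ((k:ℕ)+1 ≤ i ∧ j ≤ (w k:ℕ)+1) then 1 else 0 :=
  Finset.card_filter _ _

lemma invA_eq_sum (w : Equiv.Perm (Fin n)) :
    invA w = ∑ p : Fin n × Fin n, if (p.1 < p.2 ∧ w p.2 < w p.1) then 1 else 0 :=
  Finset.card_filter _ _

lemma sum_split_two (F : Fin n → ℕ) (a b : Fin n) (hne : a ≠ b) :
    ∑ k, F k = F a + F b + ∑ k ∈ (Finset.univ.erase a).erase b, F k := by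
  rw [← Finset.add_sum_erase _ F (Finset.mem_univ a),
      ← Finset.add_sum_erase _ F (Finset.mem_erase.mpr ⟨hne.symm, Finset.mem_univ b⟩)]
  ring

lemma entryA_swap (w : Equiv.Perm (Fin n)) {a b : Fin n} (hab : a < b) (hw : w a < w b) (i j : ℕ) :
    entryA (w * Equiv.swap a b) i j
      = entryA w i j + (if ((a:ℕ)+1 ≤ i ∧ i ≤ (b:ℕ) ∧ (w a:ℕ)+2 ≤ j ∧ j ≤ (w b:ℕ)+1) then 1 else 0) := by
  have hne : a ≠ b := hab.ne
  have hab' : (a:ℕ) < (b:ℕ) := hab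
  have hw' : (w a:ℕ) < (w b:ℕ) := hw
  rw [entryA_eq_sum, entryA_eq_sum,
    sum_split_two (fun k => if ((k:ℕ)+1 ≤ i ∧ j ≤ ((w * Equiv.swap a b) k:ℕ)+1) then 1 else 0) a b hne,
    sum_split_two (fun k => if ((k:ℕ)+1 ≤ i ∧ j ≤ (w k:ℕ)+1) then 1 else 0) a b hne]
  have htail : ∀ k ∈ (Finset.univ.erase a).erase b,
      (if ((k:ℕ)+1 ≤ i ∧ j ≤ ((w * Equiv.swap a b) k:ℕ)+1) then 1 else 0)
        = (if ((k:ℕ)+1 ≤ i ∧ j ≤ (w k:ℕ)+1) then (1:ℕ) else 0) := by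
    intro k hk
    have hkb : k ≠ b := (Finset.mem_erase.mp hk).1
    have hka : k ≠ a := (Finset.mem_erase.mp (Finset.mem_erase.mp hk).2).1
    rw [Equiv.Perm.mul_apply, Equiv.swap_apply_of_ne_of_ne hka hkb]
  rw [Finset.sum_congr rfl htail]
  simp only [Equiv.Perm.mul_apply, Equiv.swap_apply_left, Equiv.swap_apply_right]
  split_ifs <;> omega

lemma swap_pair_key (w : Equiv.Perm (Fin n)) {a b : Fin n} (hab : a < b) (hw : w a < w b)
    (i j : Fin n) :
    (if (i < j ∧ w j < w i) then (1:ℕ) else 0)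
      + (if (Equiv.swap a b i < Equiv.swap a b j ∧
            w (Equiv.swap a b j) < w (Equiv.swap a b i)) then 1 else 0)
    ≤ (if (Equiv.swap a b i < Equiv.swap a b j ∧ w j < w i) then 1 else 0)
      + (if (i < j ∧ w (Equiv.swap a b j) < w (Equiv.swap a b i)) then 1 else 0) := by
  have hab' : (a:ℕ) < (b:ℕ) := hab
  have hw' : (w a:ℕ) < (w b:ℕ) := hw
  by_cases hia : a = i
  · subst hia
    by_cases hja : a = j
    · subst hja
      simp only [Equiv.swap_apply_left, Fin.lt_def]
      split_ifs <;> omega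
    · by_cases hjb : b = j
      · subst hjb
        simp only [Equiv.swap_apply_left, Equiv.swap_apply_right, Fin.lt_def]
        split_ifs <;> omega
      · simp only [Equiv.swap_apply_left, Equiv.swap_apply_of_ne_of_ne (Ne.symm hja) (Ne.symm hjb), Fin.lt_def]
        split_ifs <;> omega
  · by_cases hib : b = i
    · subst hib
      by_cases hja : a = j
      · subst hja
        simp only [Equiv.swap_apply_left, Equiv.swap_apply_right, Fin.lt_def]
        split_ifs <;> omega
      · by_cases hjb : b = j
        · subst hjb
          simp only [Equiv.swap_apply_right, Fin.lt_def]
          split_ifs <;> omega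
        · simp only [Equiv.swap_apply_right, Equiv.swap_apply_of_ne_of_ne (Ne.symm hja) (Ne.symm hjb), Fin.lt_def]
          split_ifs <;> omega
    · by_cases hja : a = j
      · subst hja
        simp only [Equiv.swap_apply_left, Equiv.swap_apply_of_ne_of_ne (Ne.symm hia) (Ne.symm hib), Fin.lt_def]
        split_ifs <;> omega
      · by_cases hjb : b = j
        · subst hjb
          simp only [Equiv.swap_apply_right, Equiv.swap_apply_of_ne_of_ne (Ne.symm hia) (Ne.symm hib), Fin.lt_def]
          split_ifs <;> omega
        · simp only [Equiv.swap_apply_of_ne_of_ne (Ne.symm hia) (Ne.symm hib),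
            Equiv.swap_apply_of_ne_of_ne (Ne.symm hja) (Ne.symm hjb), Fin.lt_def]
          split_ifs <;> omega

lemma invA_lt_swap (w : Equiv.Perm (Fin n)) {a b : Fin n} (hab : a < b) (hw : w a < w b) :
    invA w < invA (w * Equiv.swap a b) := by
  classical
  have htt : ∀ k, Equiv.swap a b (Equiv.swap a b k) = k := fun k => Equiv.swap_apply_self a b k
  have hab' : (a:ℕ) < (b:ℕ) := hab
  have hw' : (w a:ℕ) < (w b:ℕ) := hw
  have h1 : invA w = ∑ p : Fin n × Fin n, if (p.1 < p.2 ∧ w p.2 < w p.1) then (1:ℕ) else 0 :=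
    invA_eq_sum w
  have h2 : invA (w * Equiv.swap a b)
      = ∑ p : Fin n × Fin n, if (Equiv.swap a b p.1 < Equiv.swap a b p.2 ∧ w p.2 < w p.1)
          then (1:ℕ) else 0 := by
    rw [invA_eq_sum]
    refine (Fintype.sum_equiv (Equiv.prodCongr (Equiv.swap a b) (Equiv.swap a b)) _ _ ?_).symm
    intro p
    simp [Equiv.Perm.mul_apply, htt]
  have h3 : ∑ p : Fin n × Fin n,
      (if (Equiv.swap a b p.1 < Equiv.swap a b p.2 ∧
          w (Equiv.swap a b p.2) < w (Equiv.swap a b p.1)) then (1:ℕ) else 0)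
      = ∑ p : Fin n × Fin n, if (p.1 < p.2 ∧ w p.2 < w p.1) then (1:ℕ) else 0 := by
    refine Fintype.sum_equiv (Equiv.prodCongr (Equiv.swap a b) (Equiv.swap a b)) _ _ ?_
    intro p
    rfl
  have h4 : ∑ p : Fin n × Fin n,
      (if (p.1 < p.2 ∧ w (Equiv.swap a b p.2) < w (Equiv.swap a b p.1)) then (1:ℕ) else 0)
      = ∑ p : Fin n × Fin n,
        if (Equiv.swap a b p.1 < Equiv.swap a b p.2 ∧ w p.2 < w p.1) then (1:ℕ) else 0 := by
    refine Fintype.sum_equiv (Equiv.prodCongr (Equiv.swap a b) (Equiv.swap a b)) _ _ ?_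
    intro p
    simp [htt]
  have strict :
      (if ((a,b).1 < (a,b).2 ∧ w (a,b).2 < w (a,b).1) then (1:ℕ) else 0)
        + (if (Equiv.swap a b (a,b).1 < Equiv.swap a b (a,b).2 ∧
            w (Equiv.swap a b (a,b).2) < w (Equiv.swap a b (a,b).1)) then 1 else 0)
      < (if (Equiv.swap a b (a,b).1 < Equiv.swap a b (a,b).2 ∧ w (a,b).2 < w (a,b).1)
            then 1 else 0)
        + (if ((a,b).1 < (a,b).2 ∧ w (Equiv.swap a b (a,b).2) < w (Equiv.swap a b (a,b).1))
            then 1 else 0) := by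
    simp only [Equiv.swap_apply_left, Equiv.swap_apply_right, Fin.lt_def]
    split_ifs <;> omega
  have hsum : ∑ p : Fin n × Fin n,
      ((if (p.1 < p.2 ∧ w p.2 < w p.1) then (1:ℕ) else 0)
        + (if (Equiv.swap a b p.1 < Equiv.swap a b p.2 ∧
            w (Equiv.swap a b p.2) < w (Equiv.swap a b p.1)) then 1 else 0))
      < ∑ p : Fin n × Fin n,
        ((if (Equiv.swap a b p.1 < Equiv.swap a b p.2 ∧ w p.2 < w p.1) then (1:ℕ) else 0)
          + (if (p.1 < p.2 ∧ w (Equiv.swap a b p.2) < w (Equiv.swap a b p.1)) then 1 else 0)) :=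
    Finset.sum_lt_sum (fun p _ => swap_pair_key w hab hw p.1 p.2)
      ⟨(a, b), Finset.mem_univ _, strict⟩
  rw [Finset.sum_add_distrib, Finset.sum_add_distrib, h3, h4] at hsum
  omega

def Cc {n : ℕ} (w : Equiv.Perm (Fin n)) (a : Fin n) (j : ℕ) : ℕ :=
  (Finset.univ.filter (fun k : Fin n => (k:ℕ) < (a:ℕ) ∧ j ≤ (w k:ℕ)+1)).card

def Rr {n : ℕ} (w : Equiv.Perm (Fin n)) (a : Fin n) (i j : ℕ) : ℕ :=
  (Finset.univ.filter (fun k : Fin n => (a:ℕ) < (k:ℕ) ∧ (k:ℕ)+1 ≤ i ∧ j ≤ (w k:ℕ)+1)).card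

lemma decomp_lo (w : Equiv.Perm (Fin n)) (a : Fin n) (i j : ℕ) (hi : (a:ℕ)+1 ≤ i)
    (hj : (w a:ℕ)+1 < j) : entryA w i j = Cc w a j + Rr w a i j := by
  rw [entryA_eq_sum, Cc, Rr, Finset.card_filter, Finset.card_filter, ← Finset.sum_add_distrib]
  refine Finset.sum_congr rfl fun k _ => ?_
  rcases lt_trichotomy ((k:ℕ)) ((a:ℕ)) with h | h | h
  · split_ifs <;> omega
  · have hk : k = a := Fin.ext h
    rw [hk]
    split_ifs <;> omega
  · split_ifs <;> omega

lemma decomp_hi (w : Equiv.Perm (Fin n)) (a : Fin n) (i j : ℕ) (hi : (a:ℕ)+1 ≤ i)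
    (hj : j ≤ (w a:ℕ)+1) : entryA w i j = Cc w a j + 1 + Rr w a i j := by
  have key : ∀ k : Fin n,
      (if ((k:ℕ)+1 ≤ i ∧ j ≤ (w k:ℕ)+1) then (1:ℕ) else 0)
        = (if ((k:ℕ) < (a:ℕ) ∧ j ≤ (w k:ℕ)+1) then 1 else 0)
          + (if k = a then 1 else 0)
          + (if ((a:ℕ) < (k:ℕ) ∧ (k:ℕ)+1 ≤ i ∧ j ≤ (w k:ℕ)+1) then 1 else 0) := by
    intro k
    rcases lt_trichotomy ((k:ℕ)) ((a:ℕ)) with h | h | h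
    · have hk : k ≠ a := ne_of_lt (Fin.lt_def.mpr h)
      simp only [hk, if_false]
      split_ifs <;> omega
    · have hk : k = a := Fin.ext h
      rw [hk]
      simp only [if_pos rfl]
      have := w a
      split_ifs <;> omega
    · have hk : k ≠ a := (ne_of_lt (Fin.lt_def.mpr h)).symm
      simp only [hk, if_false]
      split_ifs <;> omega
  rw [entryA_eq_sum, Cc, Rr, Finset.card_filter, Finset.card_filter,
    Finset.sum_congr rfl (fun k _ => key k), Finset.sum_add_distrib, Finset.sum_add_distrib,
    Finset.sum_ite_eq' Finset.univ a (fun _ => (1:ℕ))]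
  simp

lemma findStep (x y : Equiv.Perm (Fin n)) (H : ∀ i j, entryA x i j ≤ entryA y i j)
    (hxy : x ≠ y) :
    ∃ a b : Fin n, a < b ∧ x a < x b ∧
      (∀ i j, entryA (x * Equiv.swap a b) i j ≤ entryA y i j) := by
  classical
  have hex : ∃ k : Fin n, x k ≠ y k := by
    by_contra h
    push_neg at h
    exact hxy (Equiv.ext h)
  set S : Finset (Fin n) := Finset.univ.filter (fun k => x k ≠ y k) with hS
  have hSne : S.Nonempty := ⟨hex.choose, by simp [hS, hex.choose_spec]⟩
  set a := S.min' hSne with ha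
  have haS : x a ≠ y a := by
    have := S.min'_mem hSne
    simp only [hS, Finset.mem_filter] at this
    exact this.2
  have hlow : ∀ k : Fin n, (k:ℕ) < (a:ℕ) → x k = y k := by
    intro k hk
    by_contra h
    have hmem : k ∈ S := by simp [hS, h]
    exact absurd (S.min'_le k hmem) (not_le.mpr (Fin.lt_def.mpr hk))
  have hxa : (x a:ℕ) < (y a:ℕ) := by
    rcases lt_or_gt_of_ne (fun h => haS (Fin.ext h)) with h | h
    · exact h
    · exfalso
      have hsub : (Finset.univ.filter
            (fun k : Fin n => (k:ℕ)+1 ≤ (a:ℕ)+1 ∧ (x a:ℕ)+1 ≤ (y k:ℕ)+1))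
          ⊆ (Finset.univ.filter
            (fun k : Fin n => (k:ℕ)+1 ≤ (a:ℕ)+1 ∧ (x a:ℕ)+1 ≤ (x k:ℕ)+1)) := by
        intro k hk
        simp only [Finset.mem_filter, Finset.mem_univ, true_and] at hk ⊢
        rcases lt_trichotomy ((k:ℕ)) ((a:ℕ)) with hlt | heq | hgt
        · rw [hlow k hlt]; exact hk
        · exfalso
          have hk2 := hk.2
          rw [Fin.ext heq] at hk2
          omega
        · omega
      have hmemx : a ∈ Finset.univ.filter
          (fun k : Fin n => (k:ℕ)+1 ≤ (a:ℕ)+1 ∧ (x a:ℕ)+1 ≤ (x k:ℕ)+1) := by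
        simp
      have hmemy : a ∉ Finset.univ.filter
          (fun k : Fin n => (k:ℕ)+1 ≤ (a:ℕ)+1 ∧ (x a:ℕ)+1 ≤ (y k:ℕ)+1) := by
        simp; omega
      have hlt2 : entryA y ((a:ℕ)+1) ((x a:ℕ)+1) < entryA x ((a:ℕ)+1) ((x a:ℕ)+1) :=
        Finset.card_lt_card ((Finset.ssubset_iff_of_subset hsub).mpr ⟨a, hmemx, hmemy⟩)
      exact absurd (H ((a:ℕ)+1) ((x a:ℕ)+1)) (not_le.mpr hlt2)
  have hCc : ∀ j', Cc x a j' = Cc y a j' := by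
    intro j'
    unfold Cc
    congr 1
    refine Finset.filter_congr fun k _ => ?_
    by_cases hk : (k:ℕ) < (a:ℕ)
    · rw [hlow k hk]
    · simp [hk]
  set S2 := Finset.univ.filter
    (fun k : Fin n => (a:ℕ) < (k:ℕ) ∧ (x a:ℕ) < (x k:ℕ) ∧ (x k:ℕ) ≤ (y a:ℕ)) with hS2
  have hS2ne : S2.Nonempty := by
    refine ⟨x.symm (y a), ?_⟩
    have hk0 : x (x.symm (y a)) = y a := x.apply_symm_apply _
    simp only [hS2, Finset.mem_filter, Finset.mem_univ, true_and, hk0]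
    refine ⟨?_, hxa, le_rfl⟩
    rcases lt_trichotomy ((x.symm (y a) : ℕ)) ((a:ℕ)) with hlt | heq | hgt
    · exfalso
      have h1 : y (x.symm (y a)) = y a := by rw [← hlow _ hlt, hk0]
      have h2 : x.symm (y a) = a := y.injective h1
      rw [h2] at hlt
      omega
    · exfalso
      have h2 : x.symm (y a) = a := Fin.ext heq
      rw [h2] at hk0
      exact haS hk0
    · exact hgt
  set b := S2.min' hS2ne with hb
  have hbprops : (a:ℕ) < (b:ℕ) ∧ (x a:ℕ) < (x b:ℕ) ∧ (x b:ℕ) ≤ (y a:ℕ) := by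
    have := S2.min'_mem hS2ne
    simp only [hS2, Finset.mem_filter] at this
    exact this.2
  obtain ⟨habN, hxab, hbya⟩ := hbprops
  have hbmin : ∀ k : Fin n, (a:ℕ) < (k:ℕ) → (x a:ℕ) < (x k:ℕ) → (x k:ℕ) ≤ (y a:ℕ) →
      (b:ℕ) ≤ (k:ℕ) := by
    intro k h1 h2 h3
    exact S2.min'_le k (by
      simp only [hS2, Finset.mem_filter, Finset.mem_univ, true_and]
      exact ⟨h1, h2, h3⟩)
  have hR : ∀ i j : ℕ, (a:ℕ)+1 ≤ i → i ≤ (b:ℕ) → (x a:ℕ)+2 ≤ j → j ≤ (x b:ℕ)+1 →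
      entryA x i j < entryA y i j := by
    intro i j hi1 hi2 hj1 hj2
    have e1 : entryA x i j = Cc x a j + Rr x a i j := decomp_lo x a i j hi1 (by omega)
    have e2 : entryA y i j = Cc y a j + 1 + Rr y a i j := decomp_hi y a i j hi1 (by omega)
    have e3 : Rr x a i j = Rr x a i ((y a:ℕ)+2) := by
      unfold Rr
      congr 1
      refine Finset.filter_congr fun k _ => ?_
      by_cases hk : (a:ℕ) < (k:ℕ) ∧ (k:ℕ)+1 ≤ i
      · have hnot : ¬ ((x a:ℕ) < (x k:ℕ) ∧ (x k:ℕ) ≤ (y a:ℕ)) := by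
          intro hc
          have := hbmin k hk.1 hc.1 hc.2
          omega
        simp only [hk.1, hk.2, true_and]
        constructor <;> intro h5 <;> omega
      · constructor <;> intro h5 <;> exact absurd ⟨h5.1, h5.2.1⟩ hk
    have e4 : Rr y a i ((y a:ℕ)+2) ≤ Rr y a i j := by
      apply Finset.card_le_card
      intro k hk
      simp only [Finset.mem_filter, Finset.mem_univ, true_and] at hk ⊢
      omega
    have e5 : Rr x a i ((y a:ℕ)+2) ≤ Rr y a i ((y a:ℕ)+2) := by
      have h5 := H i ((y a:ℕ)+2)
      rw [decomp_lo x a i _ hi1 (by omega), decomp_lo y a i _ hi1 (by omega), hCc] at h5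
      omega
    have hC := hCc j
    omega
  refine ⟨a, b, Fin.lt_def.mpr habN, Fin.lt_def.mpr hxab, ?_⟩
  intro i j
  rw [entryA_swap x (Fin.lt_def.mpr habN) (Fin.lt_def.mpr hxab) i j]
  split_ifs with h
  · have := hR i j h.1 h.2.1 h.2.2.1 h.2.2.2
    omega
  · have := H i j
    omega

lemma dom_of_swap (u : Equiv.Perm (Fin n)) (a b : Fin n) (hab : a < b)
    (hinv : invA u < invA (u * Equiv.swap a b)) (i j : ℕ) :
    entryA u i j ≤ entryA (u * Equiv.swap a b) i j := by
  rcases lt_or_gt_of_ne (fun h : u a = u b => (hab.ne (u.injective h))) with hw | hw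
  · rw [entryA_swap u hab hw i j]
    exact Nat.le_add_right _ _
  · exfalso
    have h3 : (u * Equiv.swap a b) a < (u * Equiv.swap a b) b := by
      simp only [Equiv.Perm.mul_apply, Equiv.swap_apply_left, Equiv.swap_apply_right]
      exact hw
    have h4 := invA_lt_swap (u * Equiv.swap a b) hab h3
    rw [mul_assoc, Equiv.swap_mul_self, mul_one] at h4
    omega

lemma dom_of_step {u v : Equiv.Perm (Fin n)}
    (h : ∃ a b : Fin n, a ≠ b ∧ v = u * Equiv.swap a b ∧ invA u < invA v) (i j : ℕ) :
    entryA u i j ≤ entryA v i j := by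
  obtain ⟨a, b, hne, rfl, hinv⟩ := h
  rcases hne.lt_or_gt with hab | hab
  · exact dom_of_swap u a b hab hinv i j
  · rw [Equiv.swap_comm] at hinv ⊢
    exact dom_of_swap u b a hab hinv i j

lemma bruhat_dom {x y : Equiv.Perm (Fin n)} (h : BruhatA x y) (i j : ℕ) :
    entryA x i j ≤ entryA y i j := by
  induction h with
  | refl => exact le_rfl
  | tail _ hlast ih => exact le_trans ih (dom_of_step hlast i j)

lemma dom_extend (hn : 1 ≤ n) {x y : Equiv.Perm (Fin n)}
    (H : ∀ i j : ℕ, 1 ≤ i → i ≤ n → 1 ≤ j → j ≤ n → entryA x i j ≤ entryA y i j) :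
    ∀ i j, entryA x i j ≤ entryA y i j := by
  have hi0 : ∀ (w : Equiv.Perm (Fin n)) j, entryA w 0 j = 0 := by
    intro w j
    refine Finset.card_eq_zero.mpr (Finset.filter_eq_empty_iff.mpr ?_)
    intro k _
    omega
  have hjbig : ∀ (w : Equiv.Perm (Fin n)) i j, n+1 ≤ j → entryA w i j = 0 := by
    intro w i j hj
    refine Finset.card_eq_zero.mpr (Finset.filter_eq_empty_iff.mpr ?_)
    intro k _
    have := (w k).isLt
    omega
  have hj0 : ∀ (w : Equiv.Perm (Fin n)) i, entryA w i 0 = entryA w i 1 := by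
    intro w i
    unfold entryA
    congr 1
    refine Finset.filter_congr fun k _ => ?_
    constructor <;> intro h5 <;> exact ⟨h5.1, by omega⟩
  have hibig : ∀ (w : Equiv.Perm (Fin n)) i j, n ≤ i → entryA w i j = entryA w n j := by
    intro w i j hi
    unfold entryA
    congr 1
    refine Finset.filter_congr fun k _ => ?_
    have := k.isLt
    constructor <;> intro h5 <;> exact ⟨by omega, h5.2⟩
  have main1 : ∀ i j, 1 ≤ j → j ≤ n → entryA x i j ≤ entryA y i j := by
    intro i j hj1 hjn
    rcases Nat.eq_zero_or_pos i with rfl | hi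
    · rw [hi0, hi0]
    · rcases le_or_gt i n with hin | hin
      · exact H i j hi hin hj1 hjn
      · rw [hibig x i j (le_of_lt hin), hibig y i j (le_of_lt hin)]
        exact H n j hn le_rfl hj1 hjn
  intro i j
  rcases Nat.eq_zero_or_pos j with rfl | hj1
  · rw [hj0 x, hj0 y]
    exact main1 i 1 le_rfl hn
  · rcases le_or_gt j n with hjn | hjn
    · exact main1 i j hj1 hjn
    · rw [hjbig x i j (by omega)]
      exact Nat.zero_le _

/-- for `n ≥ 1` and permutations `x, y` of `{1,...,n}`,
`x ≤ y` in Bruhat order iff `x[i,j] ≤ y[i,j]` for all `1 ≤ i, j ≤ n`. -/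
theorem stmt0 (n : ℕ) (hn : 1 ≤ n) (x y : Equiv.Perm (Fin n)) :
    BruhatA x y ↔
      ∀ i j : ℕ, 1 ≤ i → i ≤ n → 1 ≤ j → j ≤ n → entryA x i j ≤ entryA y i j := by
  constructor
  · intro h i j _ _ _ _
    exact bruhat_dom h i j
  · intro H0
    have H := dom_extend hn H0
    clear H0
    suffices h : ∀ m (z : Equiv.Perm (Fin n)),
        (∑ p ∈ Finset.range (n+1) ×ˢ Finset.range (n+2),
          (entryA y p.1 p.2 - entryA z p.1 p.2)) < m →
        (∀ i j, entryA z i j ≤ entryA y i j) → BruhatA z y by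
      exact h _ x (Nat.lt_succ_self _) H
    intro m
    induction m with
    | zero => intro z hz; omega
    | succ m ih =>
      intro z hz Hz
      by_cases hzy : z = y
      · subst hzy
        exact Relation.ReflTransGen.refl
      · obtain ⟨a, b, hab, hzab, Hdom⟩ := findStep z y Hz hzy
        have habN : (a:ℕ) < (b:ℕ) := hab
        have hzabN : (z a:ℕ) < (z b:ℕ) := hzab
        have hstrict : entryA z ((a:ℕ)+1) ((z a:ℕ)+2)
            < entryA (z * Equiv.swap a b) ((a:ℕ)+1) ((z a:ℕ)+2) := by
          rw [entryA_swap z hab hzab]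
          split_ifs with hcond
          · omega
          · exfalso
            apply hcond
            refine ⟨le_rfl, by omega, le_rfl, by omega⟩
        have hmono : ∀ i j, entryA z i j ≤ entryA (z * Equiv.swap a b) i j := by
          intro i j
          rw [entryA_swap z hab hzab]
          exact Nat.le_add_right _ _
        have hmem : (((a:ℕ)+1, (z a:ℕ)+2) : ℕ × ℕ)
            ∈ Finset.range (n+1) ×ˢ Finset.range (n+2) := by
          rw [Finset.mem_product, Finset.mem_range, Finset.mem_range]
          exact ⟨by have := a.isLt; omega, by have := (z a).isLt; omega⟩
        have hlt : (∑ p ∈ Finset.range (n+1) ×ˢ Finset.range (n+2),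
            (entryA y p.1 p.2 - entryA (z * Equiv.swap a b) p.1 p.2)) < m := by
          have hsum : (∑ p ∈ Finset.range (n+1) ×ˢ Finset.range (n+2),
              (entryA y p.1 p.2 - entryA (z * Equiv.swap a b) p.1 p.2))
              < ∑ p ∈ Finset.range (n+1) ×ˢ Finset.range (n+2),
                (entryA y p.1 p.2 - entryA z p.1 p.2) := by
            apply Finset.sum_lt_sum
            · intro p _
              exact Nat.sub_le_sub_left (hmono p.1 p.2) _
            · refine ⟨_, hmem, ?_⟩
              dsimp only
              have h2 := Hdom ((a:ℕ)+1) ((z a:ℕ)+2)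
              have h3 := Hz ((a:ℕ)+1) ((z a:ℕ)+2)
              omega
          omega
        exact Relation.ReflTransGen.head
          ⟨a, b, hab.ne, rfl, invA_lt_swap z hab hzab⟩
          (ih _ hlt Hdom)

end BruhatProof
end

section
/- Let n ≥ 1 and let x, y be signed permutations of rank n. If x ≤^D y, then x[i,j] ≤ y[i,j] for all −n ≤ i, j ≤ n. -/
/-- A signed permutation of rank `n`, encoded as a permutation of `ℤ` which is odd
(`w(−k) = −w(k)`) and fixes every `k` with `|k| > n`. -/
def IsSignedPerm (n : ℕ) (w : Equiv.Perm ℤ) : Prop :=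
  (∀ k : ℤ, w (-k) = -(w k)) ∧ (∀ k : ℤ, (n : ℤ) < |k| → w k = k)

/-- `w[i,j] = #{k : −n ≤ k ≤ i, k ≠ 0, w(k) ≥ j}`. -/
noncomputable def entryB (n : ℕ) (w : Equiv.Perm ℤ) (i j : ℤ) : ℕ :=
  ((Finset.Icc (-(n : ℤ)) i).filter (fun k => k ≠ 0 ∧ j ≤ w k)).card

/-- `ℓ_D(w) = #{1 ≤ i < j ≤ n : w(i) > w(j)} + Σ_{1 ≤ i ≤ n, w(i) < 0} (|w(i)| − 1)`. -/
noncomputable def lD (n : ℕ) (w : Equiv.Perm ℤ) : ℕ :=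
  (((Finset.Icc (1 : ℤ) (n : ℤ)) ×ˢ (Finset.Icc (1 : ℤ) (n : ℤ))).filter
      (fun p => p.1 < p.2 ∧ w p.2 < w p.1)).card +
    ∑ i ∈ (Finset.Icc (1 : ℤ) (n : ℤ)).filter (fun i => w i < 0), ((w i).natAbs - 1)

/-- A D-reflection: exchanges `i ↔ j` and `−i ↔ −j`, or `i ↔ −j` and `−i ↔ j`
(some `1 ≤ i < j ≤ n`), fixing all other points. -/
def IsDReflection (n : ℕ) (t : Equiv.Perm ℤ) : Prop :=
  (∃ i j : ℤ, 1 ≤ i ∧ i < j ∧ j ≤ (n : ℤ) ∧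
    t i = j ∧ t j = i ∧ t (-i) = -j ∧ t (-j) = -i ∧
    ∀ k : ℤ, k ≠ i → k ≠ j → k ≠ -i → k ≠ -j → t k = k) ∨
  (∃ i j : ℤ, 1 ≤ i ∧ i < j ∧ j ≤ (n : ℤ) ∧
    t i = -j ∧ t (-j) = i ∧ t (-i) = j ∧ t j = -i ∧
    ∀ k : ℤ, k ≠ i → k ≠ j → k ≠ -i → k ≠ -j → t k = k)

/-- The order `≤^D`: reflexive–transitive closure of `x → x·t`, `t` a D-reflection
with `ℓ_D(x·t) > ℓ_D(x)`. -/
def BruhatD (n : ℕ) (x y : Equiv.Perm ℤ) : Prop :=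
  Relation.ReflTransGen
    (fun u v => ∃ t : Equiv.Perm ℤ,
      IsSignedPerm n t ∧ IsDReflection n t ∧ v = u * t ∧ lD n u < lD n v) x y

namespace Stmt2Aux

theorem sp_zero {n : ℕ} {w : Equiv.Perm ℤ} (h : IsSignedPerm n w) : w 0 = 0 := by
  have h0 := h.1 0
  rw [neg_zero] at h0
  omega

theorem sp_mul {n : ℕ} {u t : Equiv.Perm ℤ} (hu : IsSignedPerm n u) (ht : IsSignedPerm n t) :
    IsSignedPerm n (u * t) := by
  constructor
  · intro k
    simp only [Equiv.Perm.mul_apply, ht.1 k, hu.1 (t k)]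
  · intro k hk
    simp only [Equiv.Perm.mul_apply, ht.2 k hk, hu.2 k hk]

theorem sp_natAbs {n : ℕ} {w : Equiv.Perm ℤ} (h : IsSignedPerm n w) {k : ℤ}
    (h1 : 1 ≤ k) (h2 : k ≤ (n : ℤ)) : 1 ≤ (w k).natAbs ∧ ((w k).natAbs : ℤ) ≤ (n : ℤ) := by
  constructor
  · have hne : w k ≠ 0 := by
      intro e
      have : k = 0 := w.injective (e.trans (sp_zero h).symm)
      omega
    omega
  · by_contra hcon
    push_neg at hcon
    have habs : (n : ℤ) < |w k| := by rw [Int.abs_eq_natAbs]; omega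
    have hk := w.injective (h.2 (w k) habs)
    omega

/-- natAbs ∘ w is injective on positives. -/
theorem sp_natAbs_inj {n : ℕ} {w : Equiv.Perm ℤ} (h : IsSignedPerm n w) :
    ∀ p q : ℤ, 1 ≤ p → 1 ≤ q → (w p).natAbs = (w q).natAbs → p = q := by
  intro p q hp hq e
  rcases Int.natAbs_eq_natAbs_iff.1 e with e' | e'
  · exact w.injective e'
  · have h2 : w p = w (-q) := by rw [h.1 q]; exact e'
    have := w.injective h2
    omega

def F (r s : ℤ) : ℕ := (if s < r then 1 else 0) + (if r + s < 0 then 1 else 0)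

noncomputable def Dset (n : ℕ) : Finset (ℤ × ℤ) :=
  ((Finset.Icc (1 : ℤ) (n : ℤ)) ×ˢ (Finset.Icc (1 : ℤ) (n : ℤ))).filter fun x => x.1 < x.2

theorem count_lt {n : ℕ} {w : Equiv.Perm ℤ} (h : IsSignedPerm n w) {i : ℤ}
    (h1 : 1 ≤ i) (h2 : i ≤ (n : ℤ)) (hneg : w i < 0) :
    ((Finset.Icc (1 : ℤ) (n : ℤ)).filter (fun q => (w q).natAbs < (w i).natAbs)).card
      = (w i).natAbs - 1 := by
  have hsurj : ∀ v : ℕ, 1 ≤ v → (v : ℤ) ≤ (n : ℤ) →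
      ∃ q : ℤ, 1 ≤ q ∧ q ≤ (n : ℤ) ∧ (w q).natAbs = v := by
    intro v hv1 hv2
    have hcard : (Finset.Icc (1 : ℕ) n).card ≤ (Finset.Icc (1 : ℤ) (n : ℤ)).card := by
      rw [Nat.card_Icc, Int.card_Icc]; omega
    have hs := Finset.surj_on_of_inj_on_of_card_le (s := Finset.Icc (1 : ℤ) (n : ℤ))
      (t := Finset.Icc (1 : ℕ) n) (fun q _ => (w q).natAbs)
      (by
        intro q hq
        simp only [Finset.mem_Icc] at hq ⊢
        have := sp_natAbs h hq.1 hq.2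
        omega)
      (by
        intro p q hp hq e
        simp only [Finset.mem_Icc] at hp hq
        exact sp_natAbs_inj h p q hp.1 hq.1 e)
      hcard v (by simp only [Finset.mem_Icc]; omega)
    obtain ⟨q, hq, e⟩ := hs
    simp only [Finset.mem_Icc] at hq
    exact ⟨q, hq.1, hq.2, e.symm⟩
  rw [show (w i).natAbs - 1 = (Finset.Ico (1 : ℕ) ((w i).natAbs)).card by rw [Nat.card_Ico]]
  apply Finset.card_nbij (fun q => (w q).natAbs)
  · intro q hq
    simp only [Finset.mem_coe, Finset.mem_filter, Finset.mem_Icc] at hq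
    simp only [Finset.mem_coe, Finset.mem_Ico]
    have := sp_natAbs h hq.1.1 hq.1.2
    omega
  · intro p hp q hq e
    simp only [Finset.coe_filter, Set.mem_setOf_eq, Finset.mem_Icc] at hp hq
    exact sp_natAbs_inj h p q hp.1.1 hq.1.1 e
  · intro v hv
    simp only [Finset.coe_Ico, Set.mem_Ico] at hv
    have hin : ((w i).natAbs : ℤ) ≤ (n : ℤ) := (sp_natAbs h h1 h2).2
    obtain ⟨q, hq1, hq2, he⟩ := hsurj v hv.1 (by omega)
    refine ⟨q, ?_, he⟩
    simp only [Finset.coe_filter, Set.mem_setOf_eq, Finset.mem_Icc]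
    exact ⟨⟨hq1, hq2⟩, by omega⟩

theorem Mp_eq {n : ℕ} {w : Equiv.Perm ℤ} (h : IsSignedPerm n w) :
    ((Dset n).filter (fun x => w x.1 + w x.2 < 0)).card
      = ∑ i ∈ (Finset.Icc (1 : ℤ) (n : ℤ)).filter (fun i => w i < 0), ((w i).natAbs - 1) := by
  have step1 : ((Dset n).filter (fun x => w x.1 + w x.2 < 0)).card
      = (((Finset.Icc (1 : ℤ) (n : ℤ)) ×ˢ (Finset.Icc (1 : ℤ) (n : ℤ))).filter
          (fun x => w x.1 < 0 ∧ (w x.2).natAbs < (w x.1).natAbs)).card := by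
    apply Finset.card_bij'
      (i := fun x _ => if (w x.2).natAbs < (w x.1).natAbs then x else (x.2, x.1))
      (j := fun y _ => if y.1 < y.2 then y else (y.2, y.1))
    · intro x hx
      simp only [Dset, Finset.mem_filter, Finset.mem_product, Finset.mem_Icc] at hx
      obtain ⟨⟨⟨⟨hp1, hpn⟩, hq1, hqn⟩, hpq⟩, hsum⟩ := hx
      have hne : (w x.1).natAbs ≠ (w x.2).natAbs := fun e =>
        absurd (sp_natAbs_inj h x.1 x.2 hp1 hq1 e) (by omega)
      by_cases hd : (w x.2).natAbs < (w x.1).natAbs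
      · rw [if_pos hd]
        simp only [Finset.mem_filter, Finset.mem_product, Finset.mem_Icc]
        exact ⟨⟨⟨hp1, hpn⟩, hq1, hqn⟩, by omega, hd⟩
      · rw [if_neg hd]
        simp only [Finset.mem_filter, Finset.mem_product, Finset.mem_Icc]
        exact ⟨⟨⟨hq1, hqn⟩, hp1, hpn⟩, by omega, by omega⟩
    · intro y hy
      simp only [Finset.mem_filter, Finset.mem_product, Finset.mem_Icc] at hy
      obtain ⟨⟨⟨hp1, hpn⟩, hq1, hqn⟩, hneg, habs⟩ := hy
      have hne : y.1 ≠ y.2 := by intro e; rw [e] at habs; omega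
      by_cases hd : y.1 < y.2
      · rw [if_pos hd]
        simp only [Dset, Finset.mem_filter, Finset.mem_product, Finset.mem_Icc]
        exact ⟨⟨⟨⟨hp1, hpn⟩, hq1, hqn⟩, hd⟩, by omega⟩
      · rw [if_neg hd]
        simp only [Dset, Finset.mem_filter, Finset.mem_product, Finset.mem_Icc]
        exact ⟨⟨⟨⟨hq1, hqn⟩, hp1, hpn⟩, by omega⟩, by omega⟩
    · intro x hx
      simp only [Dset, Finset.mem_filter, Finset.mem_product, Finset.mem_Icc] at hx
      obtain ⟨⟨⟨⟨hp1, hpn⟩, hq1, hqn⟩, hpq⟩, hsum⟩ := hx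
      by_cases hd : (w x.2).natAbs < (w x.1).natAbs
      · rw [if_pos hd, if_pos hpq]
      · rw [if_neg hd, if_neg (not_lt.2 hpq.le : ¬ x.2 < x.1)]
    · intro y hy
      simp only [Finset.mem_filter, Finset.mem_product, Finset.mem_Icc] at hy
      obtain ⟨⟨⟨hp1, hpn⟩, hq1, hqn⟩, hneg, habs⟩ := hy
      by_cases hd : y.1 < y.2
      · rw [if_pos hd, if_pos habs]
      · rw [if_neg hd, if_neg (not_lt.2 habs.le : ¬ (w y.1).natAbs < (w y.2).natAbs)]
  rw [step1, Finset.card_filter, Finset.sum_product, Finset.sum_filter]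
  apply Finset.sum_congr rfl
  intro i hi
  simp only [Finset.mem_Icc] at hi
  by_cases hneg : w i < 0
  · rw [if_pos hneg]
    have hcong : ∀ q ∈ Finset.Icc (1 : ℤ) (n : ℤ),
        (if w i < 0 ∧ (w q).natAbs < (w i).natAbs then (1 : ℕ) else 0)
          = if (w q).natAbs < (w i).natAbs then 1 else 0 := by
      intro q _; simp [hneg]
    rw [Finset.sum_congr rfl hcong, ← Finset.card_filter]
    exact count_lt h hi.1 hi.2 hneg
  · rw [if_neg hneg]
    simp [hneg]

theorem lD_eq {n : ℕ} {w : Equiv.Perm ℤ} (h : IsSignedPerm n w) :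
    lD n w = ∑ x ∈ Dset n, F (w x.1) (w x.2) := by
  unfold lD F
  rw [Finset.sum_add_distrib]
  congr 1
  · rw [← Finset.card_filter]
    unfold Dset
    rw [Finset.filter_filter]
  · rw [← Finset.card_filter, ← Mp_eq h]

theorem sum_invol {α : Type*} (s : Finset α) (m : α → α)
    (hmem : ∀ x ∈ s, m x ∈ s) (hinv : ∀ x ∈ s, m (m x) = x)
    (f g : α → ℕ) (hfg : ∀ x ∈ s, f x + f (m x) ≤ g x + g (m x)) :
    ∑ x ∈ s, f x ≤ ∑ x ∈ s, g x := by
  have key : ∀ h : α → ℕ, ∑ x ∈ s, h (m x) = ∑ x ∈ s, h x := fun h =>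
    Finset.sum_nbij' m m hmem hmem hinv hinv (fun a _ => rfl)
  have h2 : ∑ x ∈ s, (f x + f (m x)) ≤ ∑ x ∈ s, (g x + g (m x)) := Finset.sum_le_sum hfg
  rw [Finset.sum_add_distrib, Finset.sum_add_distrib, key f, key g] at h2
  omega

def sw (a b k : ℤ) : ℤ := if k = a then b else if k = b then a else k

def mm (a b : ℤ) (x : ℤ × ℤ) : ℤ × ℤ :=
  if sw a b x.1 < sw a b x.2 then (sw a b x.1, sw a b x.2) else (sw a b x.2, sw a b x.1)

theorem sw_sw (a b k : ℤ) : sw a b (sw a b k) = k := by unfold sw; split_ifs <;> omega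

theorem sw_inj {a b k l : ℤ} (e : sw a b k = sw a b l) : k = l := by
  unfold sw at e; split_ifs at e <;> omega

theorem mm_eval (a b p q : ℤ) : mm a b (p, q) =
    if sw a b p < sw a b q then (sw a b p, sw a b q) else (sw a b q, sw a b p) := rfl

theorem mm_mm {a b : ℤ} {x : ℤ × ℤ} (hx : x.1 < x.2) : mm a b (mm a b x) = x := by
  obtain ⟨p, q⟩ := x
  simp only at hx
  by_cases hlt : sw a b p < sw a b q
  · rw [show mm a b (p, q) = (sw a b p, sw a b q) from by rw [mm_eval, if_pos hlt]]
    rw [mm_eval, sw_sw, sw_sw, if_pos hx]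
  · rw [show mm a b (p, q) = (sw a b q, sw a b p) from by rw [mm_eval, if_neg hlt]]
    rw [mm_eval, sw_sw, sw_sw, if_neg (not_lt.2 hx.le)]

theorem kF1 {A B : ℤ} (h : B < A) : F B A ≤ F A B := by
  unfold F; split_ifs <;> omega

theorem kF2 {A B K : ℤ} (h : B < A) (h1 : K ≠ A) (h2 : K ≠ B) :
    F B K + F K A ≤ F A K + F K B := by
  unfold F; split_ifs <;> omega

theorem kF3 {A B : ℤ} (h : A + B < 0) : F (-B) (-A) ≤ F A B := by
  unfold F; split_ifs <;> omega

theorem kF4 {A B K : ℤ} (h : A + B < 0) (h3 : K + A ≠ 0) (h2 : K ≠ B) :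
    F (-B) K + F K (-A) ≤ F A K + F K B := by
  unfold F; split_ifs <;> omega

theorem kF5 {A B K : ℤ} (h : A + B < 0) (h1 : K ≠ A) (h2 : K ≠ B)
    (h3 : K + A ≠ 0) (h4 : K + B ≠ 0) :
    F K (-A) + F K (-B) ≤ F K A + F K B := by
  unfold F; split_ifs <;> omega

theorem kF6 (B K : ℤ) : F (-B) K = F B K := by
  unfold F; split_ifs <;> omega

theorem pt1 {u t : Equiv.Perm ℤ} (a b : ℤ) (ha : 1 ≤ a) (hab : a < b)
    (hta : t a = b) (htb : t b = a)
    (tfix : ∀ k : ℤ, k ≠ a → k ≠ b → k ≠ -a → k ≠ -b → t k = k)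
    (hc : u b < u a) (p q : ℤ) (hp1 : 1 ≤ p) (hq1 : 1 ≤ q) (hpq : p < q) :
    F (u (t p)) (u (t q)) + F (u (t (mm a b (p, q)).1)) (u (t (mm a b (p, q)).2))
      ≤ F (u p) (u q) + F (u (mm a b (p, q)).1) (u (mm a b (p, q)).2) := by
  have une : ∀ {r s : ℤ}, r ≠ s → u r ≠ u s := fun hrs e => hrs (u.injective e)
  have hswa : sw a b a = b := by unfold sw; rw [if_pos rfl]
  have hswb : sw a b b = a := by unfold sw; rw [if_neg (by omega), if_pos rfl]
  rw [mm_eval]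
  by_cases hpa : a = p
  · subst hpa
    by_cases hqb : b = q
    · subst hqb
      rw [hswa, hswb, if_neg (by omega), hta, htb]
      exact Nat.add_le_add (kF1 hc) (kF1 hc)
    · have hswq : sw a b q = q := by unfold sw; rw [if_neg (by omega), if_neg (by omega : ¬ q = b)]
      have htq : t q = q := tfix q (by omega) (by omega) (by omega) (by omega)
      rw [hswa, hswq]
      by_cases hqb' : q < b
      · rw [if_neg (by omega), hta, htq, htb]
        exact kF2 hc (une (by omega)) (une (by omega))
      · rw [if_pos (by omega), hta, htq, htb]
        exact le_of_eq (Nat.add_comm _ _)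
  · by_cases hpb : b = p
    · subst hpb
      have hswq : sw a b q = q := by unfold sw; rw [if_neg (by omega), if_neg (by omega)]
      have htq : t q = q := tfix q (by omega) (by omega) (by omega) (by omega)
      rw [hswb, hswq, if_pos (by omega), htb, htq, hta]
      exact le_of_eq (Nat.add_comm _ _)
    · have hswp : sw a b p = p := by unfold sw; rw [if_neg (by omega : ¬ p = a), if_neg (by omega : ¬ p = b)]
      have htp : t p = p := tfix p (by omega) (by omega) (by omega) (by omega)
      by_cases hqa : a = q
      · subst hqa
        rw [hswp, hswa, if_pos (by omega), htp, hta, htb]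
        exact le_of_eq (Nat.add_comm _ _)
      · by_cases hqb : b = q
        · subst hqb
          rw [hswp, hswb]
          by_cases hpa' : p < a
          · rw [if_pos hpa', htp, htb, hta]
            exact le_of_eq (Nat.add_comm _ _)
          · rw [if_neg (by omega), htp, htb, hta]
            dsimp only
            have := kF2 (A := u a) (B := u b) (K := u p) hc (une (by omega)) (une (by omega))
            omega
        · have hswq : sw a b q = q := by unfold sw; rw [if_neg (by omega : ¬ q = a), if_neg (by omega : ¬ q = b)]
          have htq : t q = q := tfix q (by omega) (by omega) (by omega) (by omega)
          rw [hswp, hswq, if_pos hpq, htp, htq]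

theorem pt2 {u t : Equiv.Perm ℤ} (a b : ℤ) (ha : 1 ≤ a) (hab : a < b)
    (hodd : ∀ k : ℤ, u (-k) = -(u k))
    (hta : t a = -b) (htb : t b = -a) (htma : t (-a) = b) (htmb : t (-b) = a)
    (tfix : ∀ k : ℤ, k ≠ a → k ≠ b → k ≠ -a → k ≠ -b → t k = k)
    (hc : u a + u b < 0) (p q : ℤ) (hp1 : 1 ≤ p) (hq1 : 1 ≤ q) (hpq : p < q) :
    F (u (t p)) (u (t q)) + F (u (t (mm a b (p, q)).1)) (u (t (mm a b (p, q)).2))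
      ≤ F (u p) (u q) + F (u (mm a b (p, q)).1) (u (mm a b (p, q)).2) := by
  have une : ∀ {r s : ℤ}, r ≠ s → u r ≠ u s := fun hrs e => hrs (u.injective e)
  have usum : ∀ {r s : ℤ}, r ≠ -s → u r + u s ≠ 0 := by
    intro r s hrs e
    have h2 : u r = u (-s) := by rw [hodd]; omega
    exact hrs (u.injective h2)
  have hswa : sw a b a = b := by unfold sw; rw [if_pos rfl]
  have hswb : sw a b b = a := by unfold sw; rw [if_neg (by omega), if_pos rfl]
  rw [mm_eval]
  by_cases hpa : a = p
  · subst hpa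
    by_cases hqb : b = q
    · subst hqb
      rw [hswa, hswb, if_neg (by omega), hta, htb, hodd, hodd]
      exact Nat.add_le_add (kF3 hc) (kF3 hc)
    · have hswq : sw a b q = q := by unfold sw; rw [if_neg (by omega), if_neg (by omega : ¬ q = b)]
      have htq : t q = q := tfix q (by omega) (by omega) (by omega) (by omega)
      rw [hswa, hswq]
      by_cases hqb' : q < b
      · rw [if_neg (by omega), hta, htq, htb, hodd, hodd]
        exact kF4 hc (usum (by omega)) (une (by omega))
      · rw [if_pos (by omega), hta, htq, htb, hodd, hodd, kF6, kF6]
        exact le_of_eq (Nat.add_comm _ _)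
  · by_cases hpb : b = p
    · subst hpb
      have hswq : sw a b q = q := by unfold sw; rw [if_neg (by omega), if_neg (by omega)]
      have htq : t q = q := tfix q (by omega) (by omega) (by omega) (by omega)
      rw [hswb, hswq, if_pos (by omega), htb, htq, hta, hodd, hodd, kF6, kF6]
      exact le_of_eq (Nat.add_comm _ _)
    · have hswp : sw a b p = p := by unfold sw; rw [if_neg (by omega : ¬ p = a), if_neg (by omega : ¬ p = b)]
      have htp : t p = p := tfix p (by omega) (by omega) (by omega) (by omega)
      by_cases hqa : a = q
      · subst hqa
        rw [hswp, hswa, if_pos (by omega), htp, hta, htb, hodd, hodd]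
        dsimp only
        have := kF5 (A := u a) (B := u b) (K := u p) hc (une (by omega)) (une (by omega))
          (usum (by omega)) (usum (by omega))
        omega
      · by_cases hqb : b = q
        · subst hqb
          rw [hswp, hswb]
          by_cases hpa' : p < a
          · rw [if_pos hpa', htp, htb, hta, hodd, hodd]
            dsimp only
            have := kF5 (A := u a) (B := u b) (K := u p) hc (une (by omega)) (une (by omega))
              (usum (by omega)) (usum (by omega))
            omega
          · rw [if_neg (by omega), htp, htb, hta, hodd, hodd]
            dsimp only
            have := kF4 (A := u a) (B := u b) (K := u p) hc (usum (by omega)) (une (by omega))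
            omega
        · have hswq : sw a b q = q := by unfold sw; rw [if_neg (by omega : ¬ q = a), if_neg (by omega : ¬ q = b)]
          have htq : t q = q := tfix q (by omega) (by omega) (by omega) (by omega)
          rw [hswp, hswq, if_pos hpq, htp, htq]

theorem len_le {n : ℕ} (u t : Equiv.Perm ℤ) (hu : IsSignedPerm n u) (ht : IsSignedPerm n t)
    (a b : ℤ) (ha : 1 ≤ a) (hab : a < b) (hbn : b ≤ (n : ℤ))
    (hpt : ∀ p q : ℤ, 1 ≤ p → 1 ≤ q → p < q →
      F (u (t p)) (u (t q)) + F (u (t (mm a b (p, q)).1)) (u (t (mm a b (p, q)).2))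
        ≤ F (u p) (u q) + F (u (mm a b (p, q)).1) (u (mm a b (p, q)).2)) :
    lD n (u * t) ≤ lD n u := by
  rw [lD_eq (sp_mul hu ht), lD_eq hu]
  have hswmem : ∀ k : ℤ, 1 ≤ k → k ≤ (n : ℤ) → 1 ≤ sw a b k ∧ sw a b k ≤ (n : ℤ) := by
    intro k h1 h2; unfold sw; split_ifs <;> omega
  apply sum_invol (Dset n) (mm a b)
  · intro x hx
    simp only [Dset, Finset.mem_filter, Finset.mem_product, Finset.mem_Icc] at hx ⊢
    obtain ⟨⟨⟨hp1, hpn⟩, hq1, hqn⟩, hpq⟩ := hx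
    have b1 := hswmem x.1 hp1 hpn
    have b2 := hswmem x.2 hq1 hqn
    have hne : sw a b x.1 ≠ sw a b x.2 := fun e => absurd (sw_inj e) (by omega)
    unfold mm
    split_ifs with hlt
    · exact ⟨⟨b1, b2⟩, hlt⟩
    · exact ⟨⟨b2, b1⟩, by omega⟩
  · intro x hx
    simp only [Dset, Finset.mem_filter] at hx
    exact mm_mm hx.2
  · intro x hx
    simp only [Dset, Finset.mem_filter, Finset.mem_product, Finset.mem_Icc] at hx
    obtain ⟨⟨⟨hp1, hpn⟩, hq1, hqn⟩, hpq⟩ := hx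
    simp only [Equiv.Perm.mul_apply]
    have := hpt x.1 x.2 hp1 hq1 hpq
    simpa using this

set_option maxHeartbeats 2000000 in
theorem entry_le {n : ℕ} (u v : Equiv.Perm ℤ) (a b : ℤ) (ha : 1 ≤ a) (hab : a < b)
    (hbn : b ≤ (n : ℤ)) (hodd : ∀ k : ℤ, u (-k) = -(u k))
    (heq : ∀ k : ℤ, k ≠ a → k ≠ b → k ≠ -a → k ≠ -b → v k = u k)
    (hv : (v (-b) = -(u a) ∧ v (-a) = -(u b) ∧ v a = u b ∧ v b = u a ∧ u a < u b) ∨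
          (v (-b) = u a ∧ v (-a) = u b ∧ v a = -(u b) ∧ v b = -(u a) ∧ 0 < u a + u b))
    (i j : ℤ) : entryB n u i j ≤ entryB n v i j := by
  unfold entryB
  rw [Finset.card_filter, Finset.card_filter]
  have split : ∀ w : Equiv.Perm ℤ,
      (∑ k ∈ Finset.Icc (-(n : ℤ)) i, if k ≠ 0 ∧ j ≤ w k then (1 : ℕ) else 0)
        = (∑ k ∈ (Finset.Icc (-(n : ℤ)) i).filter
              (fun k => k = -b ∨ k = -a ∨ k = a ∨ k = b), if k ≠ 0 ∧ j ≤ w k then (1 : ℕ) else 0)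
          + ∑ k ∈ (Finset.Icc (-(n : ℤ)) i).filter
              (fun k => ¬(k = -b ∨ k = -a ∨ k = a ∨ k = b)), if k ≠ 0 ∧ j ≤ w k then (1 : ℕ) else 0 :=
    fun w => (Finset.sum_filter_add_sum_filter_not _ _ _).symm
  rw [split u, split v]
  have hrest : (∑ k ∈ (Finset.Icc (-(n : ℤ)) i).filter
        (fun k => ¬(k = -b ∨ k = -a ∨ k = a ∨ k = b)), if k ≠ 0 ∧ j ≤ u k then (1 : ℕ) else 0)
      = ∑ k ∈ (Finset.Icc (-(n : ℤ)) i).filter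
        (fun k => ¬(k = -b ∨ k = -a ∨ k = a ∨ k = b)), if k ≠ 0 ∧ j ≤ v k then (1 : ℕ) else 0 := by
    apply Finset.sum_congr rfl
    intro k hk
    simp only [Finset.mem_filter] at hk
    rw [heq k (by omega) (by omega) (by omega) (by omega)]
  rw [← hrest]
  apply Nat.add_le_add ?_ le_rfl
  have hPeq : (Finset.Icc (-(n : ℤ)) i).filter (fun k => k = -b ∨ k = -a ∨ k = a ∨ k = b)
      = ({-b, -a, a, b} : Finset ℤ).filter (· ≤ i) := by
    ext k
    simp only [Finset.mem_filter, Finset.mem_Icc, Finset.mem_insert, Finset.mem_singleton]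
    omega
  rw [hPeq]
  rcases lt_or_ge i (-b) with hi | hi
  · have he : ({-b, -a, a, b} : Finset ℤ).filter (· ≤ i) = ∅ := by
      ext k
      simp only [Finset.mem_filter, Finset.mem_insert, Finset.mem_singleton,
        Finset.notMem_empty, iff_false]
      omega
    rw [he]
    simp
  · rcases lt_or_ge i (-a) with hi2 | hi2
    · have he : ({-b, -a, a, b} : Finset ℤ).filter (· ≤ i) = {-b} := by
        ext k
        simp only [Finset.mem_filter, Finset.mem_insert, Finset.mem_singleton]
        omega
      rw [he, Finset.sum_singleton, Finset.sum_singleton]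
      rcases hv with ⟨e1, e2, e3, e4, hc⟩ | ⟨e1, e2, e3, e4, hc⟩ <;>
        simp only [hodd, e1] <;> split_ifs <;> omega
    · rcases lt_or_ge i a with hi3 | hi3
      · have he : ({-b, -a, a, b} : Finset ℤ).filter (· ≤ i) = {-b, -a} := by
          ext k
          simp only [Finset.mem_filter, Finset.mem_insert, Finset.mem_singleton]
          omega
        rw [he, Finset.sum_insert (by simp only [Finset.mem_singleton]; omega),
          Finset.sum_singleton, Finset.sum_insert (by simp only [Finset.mem_singleton]; omega),
          Finset.sum_singleton]
        rcases hv with ⟨e1, e2, e3, e4, hc⟩ | ⟨e1, e2, e3, e4, hc⟩ <;>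
          simp only [hodd, e1, e2] <;> split_ifs <;> omega
      · rcases lt_or_ge i b with hi4 | hi4
        · have he : ({-b, -a, a, b} : Finset ℤ).filter (· ≤ i) = {-b, -a, a} := by
            ext k
            simp only [Finset.mem_filter, Finset.mem_insert, Finset.mem_singleton]
            omega
          rw [he, Finset.sum_insert (by simp only [Finset.mem_insert, Finset.mem_singleton]; omega),
            Finset.sum_insert (by simp only [Finset.mem_singleton]; omega), Finset.sum_singleton,
            Finset.sum_insert (by simp only [Finset.mem_insert, Finset.mem_singleton]; omega),
            Finset.sum_insert (by simp only [Finset.mem_singleton]; omega), Finset.sum_singleton]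
          rcases hv with ⟨e1, e2, e3, e4, hc⟩ | ⟨e1, e2, e3, e4, hc⟩ <;>
            simp only [hodd, e1, e2, e3] <;> split_ifs <;> omega
        · have he : ({-b, -a, a, b} : Finset ℤ).filter (· ≤ i) = {-b, -a, a, b} := by
            ext k
            simp only [Finset.mem_filter, Finset.mem_insert, Finset.mem_singleton]
            omega
          rw [he, Finset.sum_insert (by simp only [Finset.mem_insert, Finset.mem_singleton]; omega),
            Finset.sum_insert (by simp only [Finset.mem_insert, Finset.mem_singleton]; omega),
            Finset.sum_insert (by simp only [Finset.mem_singleton]; omega), Finset.sum_singleton,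
            Finset.sum_insert (by simp only [Finset.mem_insert, Finset.mem_singleton]; omega),
            Finset.sum_insert (by simp only [Finset.mem_insert, Finset.mem_singleton]; omega),
            Finset.sum_insert (by simp only [Finset.mem_singleton]; omega), Finset.sum_singleton]
          rcases hv with ⟨e1, e2, e3, e4, hc⟩ | ⟨e1, e2, e3, e4, hc⟩ <;>
            simp only [hodd, e1, e2, e3, e4] <;> split_ifs <;> omega

theorem step {n : ℕ} {u t : Equiv.Perm ℤ} (hu : IsSignedPerm n u) (ht : IsSignedPerm n t)
    (hrefl : IsDReflection n t) (hlen : lD n u < lD n (u * t)) (i j : ℤ) :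
    entryB n u i j ≤ entryB n (u * t) i j := by
  have hodd := hu.1
  have muval : ∀ k : ℤ, (u * t) k = u (t k) := fun k => rfl
  rcases hrefl with ⟨a, b, ha, hab, hbn, hta, htb, htma, htmb, tfix⟩ |
    ⟨a, b, ha, hab, hbn, hta, htmb, htma, htb, tfix⟩
  · by_cases hc : u a < u b
    · apply entry_le u (u * t) a b ha hab hbn hodd ?_ ?_ i j
      · intro k h1 h2 h3 h4
        rw [muval, tfix k h1 h2 h3 h4]
      · left
        refine ⟨?_, ?_, ?_, ?_, hc⟩
        · rw [muval, htmb, hodd]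
        · rw [muval, htma, hodd]
        · rw [muval, hta]
        · rw [muval, htb]
    · exfalso
      have hne : u a ≠ u b := fun e => absurd (u.injective e) (by omega)
      have hc' : u b < u a := by omega
      have := len_le u t hu ht a b ha hab hbn
        (fun p q hp hq hpq => pt1 a b ha hab hta htb tfix hc' p q hp hq hpq)
      omega
  · have hne : u a + u b ≠ 0 := by
      intro e
      have h2 : u a = u (-b) := by rw [hodd]; omega
      have := u.injective h2
      omega
    by_cases hc : 0 < u a + u b
    · apply entry_le u (u * t) a b ha hab hbn hodd ?_ ?_ i j
      · intro k h1 h2 h3 h4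
        rw [muval, tfix k h1 h2 h3 h4]
      · right
        refine ⟨?_, ?_, ?_, ?_, hc⟩
        · rw [muval, htmb]
        · rw [muval, htma]
        · rw [muval, hta, hodd]
        · rw [muval, htb, hodd]
    · exfalso
      have hc' : u a + u b < 0 := by omega
      have := len_le u t hu ht a b ha hab hbn
        (fun p q hp hq hpq => pt2 a b ha hab hodd hta htb htma htmb tfix hc' p q hp hq hpq)
      omega

end Stmt2Aux

/-- for signed permutations `x, y` of rank `n ≥ 1`, if `x ≤^D y`
then `x[i,j] ≤ y[i,j]` for all `−n ≤ i, j ≤ n`. -/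
theorem stmt2 (n : ℕ) (hn : 1 ≤ n) (x y : Equiv.Perm ℤ)
    (hx : IsSignedPerm n x) (hy : IsSignedPerm n y) (hxy : BruhatD n x y) :
    ∀ i j : ℤ, -(n : ℤ) ≤ i → i ≤ (n : ℤ) → -(n : ℤ) ≤ j → j ≤ (n : ℤ) →
      entryB n x i j ≤ entryB n y i j := by
  intro i j _ _ _ _
  suffices h : IsSignedPerm n y ∧ ∀ i' j' : ℤ, entryB n x i' j' ≤ entryB n y i' j' from h.2 i j
  clear hy
  induction hxy with
  | refl => exact ⟨hx, fun _ _ => le_rfl⟩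
  | tail hab hrel ih =>
      obtain ⟨t, ht, hrefl, rfl, hlen⟩ := hrel
      exact ⟨Stmt2Aux.sp_mul ih.1 ht, fun i' j' =>
        (ih.2 i' j').trans (Stmt2Aux.step ih.1 ht hrefl hlen i' j')⟩
end

section
/- Let n ≥ 1 and let x, y be signed permutations of rank n. If x ≤^D y, then x ≤^B y. -/
/-- `ℓ_B(w) = #{1 ≤ i < j ≤ n : w(i) > w(j)} + Σ_{1 ≤ i ≤ n, w(i) < 0} |w(i)|`. -/
noncomputable def lB (n : ℕ) (w : Equiv.Perm ℤ) : ℕ :=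
  (((Finset.Icc (1 : ℤ) (n : ℤ)) ×ˢ (Finset.Icc (1 : ℤ) (n : ℤ))).filter
      (fun p => p.1 < p.2 ∧ w p.2 < w p.1)).card +
    ∑ i ∈ (Finset.Icc (1 : ℤ) (n : ℤ)).filter (fun i => w i < 0), (w i).natAbs

/-- A B-reflection: a D-reflection, or an exchange `i ↔ −i` (some `1 ≤ i ≤ n`)
fixing all other points. -/
def IsBReflection (n : ℕ) (t : Equiv.Perm ℤ) : Prop :=
  IsDReflection n t ∨
  (∃ i : ℤ, 1 ≤ i ∧ i ≤ (n : ℤ) ∧ t i = -i ∧ t (-i) = i ∧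
    ∀ k : ℤ, k ≠ i → k ≠ -i → t k = k)

/-- The Bruhat order `≤^B`. -/
def BruhatB (n : ℕ) (x y : Equiv.Perm ℤ) : Prop :=
  Relation.ReflTransGen
    (fun u v => ∃ t : Equiv.Perm ℤ,
      IsSignedPerm n t ∧ IsBReflection n t ∧ v = u * t ∧ lB n u < lB n v) x y

namespace Stmt3Aux

open Finset

/-- The index set `{1, ..., n}` as a finset of integers. -/
noncomputable def NS (n : ℕ) : Finset ℤ := Finset.Icc (1 : ℤ) (n : ℤ)

noncomputable def invC (n : ℕ) (w : Equiv.Perm ℤ) : ℕ :=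
  (((NS n) ×ˢ (NS n)).filter (fun p => p.1 < p.2 ∧ w p.2 < w p.1)).card

noncomputable def negC (n : ℕ) (w : Equiv.Perm ℤ) : ℕ := ((NS n).filter (fun i => w i < 0)).card

noncomputable def negP (n : ℕ) (w : Equiv.Perm ℤ) : ℕ :=
  ∑ i ∈ (NS n).filter (fun i => w i < 0), ((w i).natAbs - 1)

lemma lD_eq (n : ℕ) (w : Equiv.Perm ℤ) : lD n w = invC n w + negP n w := rfl

lemma lB_eq (n : ℕ) (w : Equiv.Perm ℤ) : lB n w = lD n w + negC n w := by
  have h : ∑ i ∈ (NS n).filter (fun i => w i < 0), (w i).natAbs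
      = ∑ i ∈ (NS n).filter (fun i => w i < 0), (((w i).natAbs - 1) + 1) := by
    refine Finset.sum_congr rfl (fun k hk => ?_)
    have hk' : w k < 0 := (Finset.mem_filter.1 hk).2
    have : (w k).natAbs ≠ 0 := Int.natAbs_ne_zero.2 (by omega)
    omega
  show invC n w + ∑ i ∈ (NS n).filter (fun i => w i < 0), (w i).natAbs
      = (invC n w + negP n w) + negC n w
  rw [h, Finset.sum_add_distrib]
  unfold negP negC
  rw [Finset.card_eq_sum_ones]
  ring

lemma perm_zero {u : Equiv.Perm ℤ} (hu : ∀ k : ℤ, u (-k) = -(u k)) : u 0 = 0 := by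
  have h := hu 0
  simp at h
  omega

lemma perm_ne_zero {u : Equiv.Perm ℤ} (hu : ∀ k : ℤ, u (-k) = -(u k)) {k : ℤ} (hk : k ≠ 0) :
    u k ≠ 0 := by
  intro h
  exact hk (u.injective (by rw [h, perm_zero hu]))

lemma perm_abs_inj {u : Equiv.Perm ℤ} (hu : ∀ k : ℤ, u (-k) = -(u k)) {k k' : ℤ}
    (hk : 0 < k) (hk' : 0 < k') (h : (u k).natAbs = (u k').natAbs) : k = k' := by
  rcases Int.natAbs_eq_natAbs_iff.1 h with h1 | h1
  · exact u.injective h1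
  · have : u k = u (-k') := by rw [hu k', h1]
    have := u.injective this
    omega

/-- Generic splitting of a sum over `s` isolating two points. -/
lemma sum_split (s : Finset ℤ) (f g : ℤ → ℕ) (i j : ℤ) (hi : i ∈ s) (hj : j ∈ s) (hij : i ≠ j)
    (h : ∀ k ∈ s, k ≠ i → k ≠ j → f k = g k) :
    ∑ k ∈ s, f k + (g i + g j) = ∑ k ∈ s, g k + (f i + f j) := by
  classical
  have hi' : i ∈ s.erase j := Finset.mem_erase.2 ⟨hij, hi⟩
  have e1 : f j + ∑ k ∈ s.erase j, f k = ∑ k ∈ s, f k := Finset.add_sum_erase s f hj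
  have e2 : f i + ∑ k ∈ (s.erase j).erase i, f k = ∑ k ∈ s.erase j, f k :=
    Finset.add_sum_erase _ f hi'
  have e3 : g j + ∑ k ∈ s.erase j, g k = ∑ k ∈ s, g k := Finset.add_sum_erase s g hj
  have e4 : g i + ∑ k ∈ (s.erase j).erase i, g k = ∑ k ∈ s.erase j, g k :=
    Finset.add_sum_erase _ g hi'
  have e5 : ∑ k ∈ (s.erase j).erase i, f k = ∑ k ∈ (s.erase j).erase i, g k := by
    refine Finset.sum_congr rfl (fun k hk => ?_)
    have h1 := Finset.mem_erase.1 hk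
    have h2 := Finset.mem_erase.1 h1.2
    exact h k h2.2 h1.1 h2.1
  omega

lemma negC_split (n : ℕ) (u w : Equiv.Perm ℤ) (i j : ℤ) (hi : i ∈ NS n) (hj : j ∈ NS n)
    (hij : i ≠ j) (hrest : ∀ k ∈ NS n, k ≠ i → k ≠ j → w k = u k) :
    negC n w + ((if u i < 0 then 1 else 0) + (if u j < 0 then 1 else 0))
      = negC n u + ((if w i < 0 then 1 else 0) + (if w j < 0 then 1 else 0)) := by
  unfold negC
  rw [Finset.card_filter, Finset.card_filter]
  exact sum_split (NS n) (fun k => if w k < 0 then 1 else 0) (fun k => if u k < 0 then 1 else 0)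
    i j hi hj hij (fun k hk h1 h2 => by simp only [hrest k hk h1 h2])

lemma negP_split (n : ℕ) (u w : Equiv.Perm ℤ) (i j : ℤ) (hi : i ∈ NS n) (hj : j ∈ NS n)
    (hij : i ≠ j) (hrest : ∀ k ∈ NS n, k ≠ i → k ≠ j → w k = u k) :
    negP n w + ((if u i < 0 then (u i).natAbs - 1 else 0) + (if u j < 0 then (u j).natAbs - 1 else 0))
      = negP n u + ((if w i < 0 then (w i).natAbs - 1 else 0) + (if w j < 0 then (w j).natAbs - 1 else 0)) := by
  unfold negP
  rw [Finset.sum_filter, Finset.sum_filter]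
  exact sum_split (NS n) (fun k => if w k < 0 then (w k).natAbs - 1 else 0)
    (fun k => if u k < 0 then (u k).natAbs - 1 else 0)
    i j hi hj hij (fun k hk h1 h2 => by simp only [hrest k hk h1 h2])

end Stmt3Aux

namespace Stmt3Aux

lemma lemA (n : ℕ) (u w : Equiv.Perm ℤ) (hu : ∀ k : ℤ, u (-k) = -(u k))
    (i j : ℤ) (hi1 : 1 ≤ i) (hij : i < j) (hjn : j ≤ (n : ℤ))
    (hwi : w i = -(u j)) (hwj : w j = -(u i))
    (hrest : ∀ k ∈ NS n, k ≠ i → k ≠ j → w k = u k)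
    (ha : 0 < u i) (hb : 0 < u j) : lD n u < lD n w := by
  classical
  set A := (u i).natAbs with hA'
  set B := (u j).natAbs with hB'
  have hiN : i ∈ NS n := Finset.mem_Icc.2 ⟨hi1, by omega⟩
  have hjN : j ∈ NS n := Finset.mem_Icc.2 ⟨by omega, hjn⟩
  have hAZ : (A : ℤ) = u i := Int.natAbs_of_nonneg ha.le
  have hBZ : (B : ℤ) = u j := Int.natAbs_of_nonneg hb.le
  have hab : u i ≠ u j := fun h => by have := u.injective h; omega
  have hAB : A ≠ B := fun h => hab (by rw [← hAZ, ← hBZ, h])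
  have hA1 : 1 ≤ A := by omega
  have hB1 : 1 ≤ B := by omega
  have hne : ∀ k, 0 < k → k ≠ i → k ≠ j →
      u k ≠ u i ∧ u k ≠ u j ∧ u k ≠ -(u i) ∧ u k ≠ -(u j) ∧ u k ≠ 0 := by
    intro k hk hki hkj
    refine ⟨fun h => hki (u.injective h), fun h => hkj (u.injective h),
      fun h => ?_, fun h => ?_, perm_ne_zero hu (by omega)⟩
    · have h2 : u k = u (-i) := by rw [hu i, h]
      have := u.injective h2; omega
    · have h2 : u k = u (-j) := by rw [hu j, h]
      have := u.injective h2; omega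
  -- negative part
  have hnegP : negP n w = negP n u + ((B - 1) + (A - 1)) := by
    have h := negP_split n u w i j hiN hjN (by omega) hrest
    rw [hwi, hwj] at h
    rw [if_neg (by omega : ¬ (u i < 0)), if_neg (by omega : ¬ (u j < 0)),
      if_pos (by omega : -(u j) < 0), if_pos (by omega : -(u i) < 0),
      Int.natAbs_neg, Int.natAbs_neg] at h
    omega
  -- loss sets
  set F1 := (NS n).filter (fun k => i < k ∧ k ≠ j ∧ -(u j) < u k ∧ u k < u i) with hF1
  set F2 := (NS n).filter (fun k => j < k ∧ -(u i) < u k ∧ u k < u j) with hF2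
  -- inversion bound
  have hinv : invC n u ≤ invC n w + (F1.card + F2.card) := by
    set InvW := ((NS n ×ˢ NS n).filter (fun p => p.1 < p.2 ∧ w p.2 < w p.1)) with hIW
    set F1i := F1.image (fun q => (i, q)) with hF1i
    set F2i := F2.image (fun q => (j, q)) with hF2i
    have hsub : ((NS n ×ˢ NS n).filter (fun p => p.1 < p.2 ∧ u p.2 < u p.1))
        ⊆ InvW ∪ F1i ∪ F2i := by
      rintro ⟨p, q⟩ hm
      simp only [Finset.mem_filter, Finset.mem_product] at hm
      obtain ⟨⟨hpN, hqN⟩, hpq, hinvu⟩ := hm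
      have hp1 : 1 ≤ p := (Finset.mem_Icc.1 hpN).1
      have hq1 : 1 ≤ q := (Finset.mem_Icc.1 hqN).1
      have inW : w q < w p → ((p,q) : ℤ × ℤ) ∈ InvW ∪ F1i ∪ F2i := fun h =>
        Finset.mem_union_left _ (Finset.mem_union_left _ (Finset.mem_filter.2
          ⟨Finset.mem_product.2 ⟨hpN, hqN⟩, hpq, h⟩))
      by_cases hqi : q = i
      · subst hqi
        have hwp : w p = u p := hrest p hpN (by omega) (by omega)
        exact inW (by rw [hwp, hwi]; omega)
      by_cases hqj : q = j
      · subst hqj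
        by_cases hpi : p = i
        · subst hpi
          exact inW (by rw [hwi, hwj]; omega)
        · have hwp : w p = u p := hrest p hpN hpi (by omega)
          exact inW (by rw [hwp, hwj]; omega)
      -- q ∉ {i,j}
      have hwq : w q = u q := hrest q hqN hqi hqj
      obtain ⟨e1, e2, e3, e4, e5⟩ := hne q (by omega) hqi hqj
      by_cases hpi : p = i
      · subst hpi
        by_cases hlow : u q < -(u j)
        · exact inW (by rw [hwq, hwi]; omega)
        · refine Finset.mem_union_left _ (Finset.mem_union_right _ ?_)
          exact Finset.mem_image_of_mem _
            (Finset.mem_filter.2 ⟨hqN, hpq, hqj, by omega, hinvu⟩)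
      by_cases hpj : p = j
      · subst hpj
        by_cases hlow : u q < -(u i)
        · exact inW (by rw [hwq, hwj]; omega)
        · refine Finset.mem_union_right _ ?_
          exact Finset.mem_image_of_mem _
            (Finset.mem_filter.2 ⟨hqN, hpq, by omega, hinvu⟩)
      · have hwp : w p = u p := hrest p hpN hpi hpj
        exact inW (by rw [hwp, hwq]; exact hinvu)
    have c1 : invC n u ≤ (InvW ∪ F1i ∪ F2i).card := Finset.card_le_card hsub
    have c2 : (InvW ∪ F1i ∪ F2i).card ≤ (InvW ∪ F1i).card + F2i.card :=
      Finset.card_union_le _ _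
    have c3 : (InvW ∪ F1i).card ≤ InvW.card + F1i.card := Finset.card_union_le _ _
    have c4 : F1i.card ≤ F1.card := Finset.card_image_le
    have c5 : F2i.card ≤ F2.card := Finset.card_image_le
    have c6 : InvW.card = invC n w := rfl
    omega
  -- bound on the loss sets
  have hFbound : F1.card + F2.card ≤ A + B - 3 := by
    set D := F1.image (fun k => (k, true)) ∪ F2.image (fun k => (k, false)) with hD
    set T := ((Finset.Icc 1 (A-1)).erase B).image (fun m => (m, true))
        ∪ ((Finset.Icc 1 (B-1)).erase A).image (fun m => (m, false)) with hT
    have hDmem : ∀ k : ℤ, ∀ s : Bool, (k, s) ∈ D →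
        (0 < k ∧ k ≠ i ∧ k ≠ j) ∧ ((s = true ∧ k ∈ F1) ∨ (s = false ∧ k ∈ F2)) := by
      intro k s hk
      rcases Finset.mem_union.1 hk with h | h
      · obtain ⟨k', hk', he⟩ := Finset.mem_image.1 h
        injection he with h1 h2
        subst h1; subst h2
        obtain ⟨-, h2, h3, -⟩ := Finset.mem_filter.1 hk'
        exact ⟨⟨by omega, by omega, h3⟩, Or.inl ⟨rfl, hk'⟩⟩
      · obtain ⟨k', hk', he⟩ := Finset.mem_image.1 h
        injection he with h1 h2
        subst h1; subst h2
        obtain ⟨-, h2, -⟩ := Finset.mem_filter.1 hk'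
        exact ⟨⟨by omega, by omega, by omega⟩, Or.inr ⟨rfl, hk'⟩⟩
    have hDcard : D.card = F1.card + F2.card := by
      rw [hD, Finset.card_union_of_disjoint, Finset.card_image_of_injective _
          (fun x y h => by simpa using h), Finset.card_image_of_injective _
          (fun x y h => by simpa using h)]
      simp only [Finset.disjoint_left, Finset.mem_image]
      rintro ⟨k, s⟩ ⟨k1, -, h1⟩ ⟨k2, -, h2⟩
      rw [← h2] at h1
      simp at h1
    have hmap : D.card ≤ T.card := by
      apply Finset.card_le_card_of_injOn
        (fun p => ((u p.1).natAbs, if 0 < u p.1 then p.2 else !p.2))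
      · rintro ⟨k, s⟩ hk
        obtain ⟨⟨hk0, hki, hkj⟩, hcase⟩ := hDmem k s hk
        obtain ⟨e1, e2, e3, e4, e5⟩ := hne k hk0 hki hkj
        rcases hcase with ⟨rfl, hkF⟩ | ⟨rfl, hkF⟩
        · obtain ⟨-, -, -, hv1, hv2⟩ := Finset.mem_filter.1 hkF
          by_cases hpos : 0 < u k
          · have hm : ((u k).natAbs : ℤ) = u k := Int.natAbs_of_nonneg hpos.le
            have hnB : (u k).natAbs ≠ B := fun h => e2 (by omega)
            dsimp only
            rw [if_pos hpos]
            exact Finset.mem_union_left _ (Finset.mem_image_of_mem _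
              (Finset.mem_erase.2 ⟨hnB, Finset.mem_Icc.2 ⟨by omega, by omega⟩⟩))
          · have hm : ((u k).natAbs : ℤ) = -(u k) := Int.ofNat_natAbs_of_nonpos (by omega)
            have hnA : (u k).natAbs ≠ A := fun h => e3 (by omega)
            dsimp only
            rw [if_neg hpos]
            exact Finset.mem_union_right _ (Finset.mem_image_of_mem _
              (Finset.mem_erase.2 ⟨hnA, Finset.mem_Icc.2 ⟨by omega, by omega⟩⟩))
        · obtain ⟨-, -, hv1, hv2⟩ := Finset.mem_filter.1 hkF
          by_cases hpos : 0 < u k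
          · have hm : ((u k).natAbs : ℤ) = u k := Int.natAbs_of_nonneg hpos.le
            have hnA : (u k).natAbs ≠ A := fun h => e1 (by omega)
            dsimp only
            rw [if_pos hpos]
            exact Finset.mem_union_right _ (Finset.mem_image_of_mem _
              (Finset.mem_erase.2 ⟨hnA, Finset.mem_Icc.2 ⟨by omega, by omega⟩⟩))
          · have hm : ((u k).natAbs : ℤ) = -(u k) := Int.ofNat_natAbs_of_nonpos (by omega)
            have hnB : (u k).natAbs ≠ B := fun h => e4 (by omega)
            dsimp only
            rw [if_neg hpos]
            exact Finset.mem_union_left _ (Finset.mem_image_of_mem _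
              (Finset.mem_erase.2 ⟨hnB, Finset.mem_Icc.2 ⟨by omega, by omega⟩⟩))
      · rintro ⟨k, s⟩ hk ⟨k', s'⟩ hk' he
        obtain ⟨⟨hk0, -, -⟩, -⟩ := hDmem k s (Finset.mem_coe.1 hk)
        obtain ⟨⟨hk0', -, -⟩, -⟩ := hDmem k' s' (Finset.mem_coe.1 hk')
        simp only [Prod.mk.injEq] at he
        obtain ⟨h1, h2⟩ := he
        have hkk : k = k' := perm_abs_inj hu hk0 hk0' h1
        subst hkk
        by_cases h : 0 < u k
        · rw [if_pos h, if_pos h] at h2; rw [h2]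
        · rw [if_neg h, if_neg h] at h2
          rw [Bool.not_inj h2]
    have hTcard : T.card ≤ A + B - 3 := by
      have t0 : T.card ≤ ((Finset.Icc 1 (A-1)).erase B).card
          + ((Finset.Icc 1 (B-1)).erase A).card :=
        le_trans (Finset.card_union_le _ _)
          (add_le_add Finset.card_image_le Finset.card_image_le)
      rcases lt_or_gt_of_ne hAB with h | h
      · have hm : A ∈ Finset.Icc 1 (B-1) := Finset.mem_Icc.2 ⟨hA1, by omega⟩
        have e1 := Finset.card_erase_of_mem hm
        have e2 : ((Finset.Icc 1 (A-1)).erase B).card ≤ (Finset.Icc 1 (A-1)).card :=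
          Finset.card_erase_le
        rw [Nat.card_Icc] at e1 e2
        omega
      · have hm : B ∈ Finset.Icc 1 (A-1) := Finset.mem_Icc.2 ⟨hB1, by omega⟩
        have e1 := Finset.card_erase_of_mem hm
        have e2 : ((Finset.Icc 1 (B-1)).erase A).card ≤ (Finset.Icc 1 (B-1)).card :=
          Finset.card_erase_le
        rw [Nat.card_Icc] at e1 e2
        omega
    omega
  rw [lD_eq, lD_eq, hnegP]
  omega

end Stmt3Aux

namespace Stmt3Aux

lemma signed_mul (n : ℕ) {u t : Equiv.Perm ℤ} (hu : IsSignedPerm n u)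
    (ht : IsSignedPerm n t) : IsSignedPerm n (u * t) := by
  constructor
  · intro k
    rw [Equiv.Perm.mul_apply, Equiv.Perm.mul_apply, ht.1 k, hu.1 (t k)]
  · intro k hk
    rw [Equiv.Perm.mul_apply, ht.2 k hk, hu.2 k hk]

lemma keystep (n : ℕ) (u t : Equiv.Perm ℤ) (hu : IsSignedPerm n u) (ht : IsSignedPerm n t)
    (htD : IsDReflection n t) (hlen : lD n u < lD n (u * t)) : lB n u < lB n (u * t) := by
  classical
  obtain ⟨hu1, hu2⟩ := hu
  rcases htD with ⟨i, j, hi1, hij, hjn, ht1, ht2, ht3, ht4, ht5⟩ |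
    ⟨i, j, hi1, hij, hjn, ht1, ht2, ht3, ht4, ht5⟩
  · -- type 1 : i ↔ j
    have hiN : i ∈ NS n := Finset.mem_Icc.2 ⟨hi1, by omega⟩
    have hjN : j ∈ NS n := Finset.mem_Icc.2 ⟨by omega, hjn⟩
    have hwi : (u * t) i = u j := by rw [Equiv.Perm.mul_apply, ht1]
    have hwj : (u * t) j = u i := by rw [Equiv.Perm.mul_apply, ht2]
    have hrest : ∀ k ∈ NS n, k ≠ i → k ≠ j → (u * t) k = u k := by
      intro k hk h1 h2
      have hk1 := (Finset.mem_Icc.1 hk).1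
      rw [Equiv.Perm.mul_apply, ht5 k h1 h2 (by omega) (by omega)]
    have h := negC_split n u (u * t) i j hiN hjN (by omega) hrest
    rw [hwi, hwj] at h
    rw [lB_eq, lB_eq]
    have hnegC : negC n (u * t) = negC n u := by split_ifs at h <;> omega
    omega
  · -- type 2 : i ↔ -j
    have hiN : i ∈ NS n := Finset.mem_Icc.2 ⟨hi1, by omega⟩
    have hjN : j ∈ NS n := Finset.mem_Icc.2 ⟨by omega, hjn⟩
    have hwi : (u * t) i = -(u j) := by rw [Equiv.Perm.mul_apply, ht1, hu1 j]
    have hwj : (u * t) j = -(u i) := by rw [Equiv.Perm.mul_apply, ht4, hu1 i]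
    have hrest : ∀ k ∈ NS n, k ≠ i → k ≠ j → (u * t) k = u k := by
      intro k hk h1 h2
      have hk1 := (Finset.mem_Icc.1 hk).1
      rw [Equiv.Perm.mul_apply, ht5 k h1 h2 (by omega) (by omega)]
    have hui0 : u i ≠ 0 := perm_ne_zero hu1 (by omega)
    have huj0 : u j ≠ 0 := perm_ne_zero hu1 (by omega)
    have h := negC_split n u (u * t) i j hiN hjN (by omega) hrest
    rw [hwi, hwj] at h
    rcases lt_or_gt_of_ne hui0 with hai | hai <;> rcases lt_or_gt_of_ne huj0 with hbj | hbj
    · -- both negative : contradiction with hlen via lemA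
      exfalso
      have hsp : IsSignedPerm n (u * t) := signed_mul n ⟨hu1, hu2⟩ ht
      have hcontr := lemA n (u * t) u hsp.1 i j hi1 hij hjn
        (by rw [hwj, neg_neg]) (by rw [hwi, neg_neg])
        (fun k hk h1 h2 => (hrest k hk h1 h2).symm)
        (by rw [hwi]; omega) (by rw [hwj]; omega)
      omega
    · -- u i < 0 < u j
      rw [if_pos hai, if_neg (by omega : ¬ u j < 0),
        if_pos (by omega : -(u j) < 0), if_neg (by omega : ¬ -(u i) < 0)] at h
      rw [lB_eq, lB_eq]; omega
    · -- u j < 0 < u i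
      rw [if_neg (by omega : ¬ u i < 0), if_pos hbj,
        if_neg (by omega : ¬ -(u j) < 0), if_pos (by omega : -(u i) < 0)] at h
      rw [lB_eq, lB_eq]; omega
    · -- both positive
      rw [if_neg (by omega : ¬ u i < 0), if_neg (by omega : ¬ u j < 0),
        if_pos (by omega : -(u j) < 0), if_pos (by omega : -(u i) < 0)] at h
      rw [lB_eq, lB_eq]; omega

end Stmt3Aux

/-- for signed permutations `x, y` of rank `n ≥ 1`,
if `x ≤^D y` then `x ≤^B y`. -/
theorem stmt3 (n : ℕ) (hn : 1 ≤ n) (x y : Equiv.Perm ℤ)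
    (hx : IsSignedPerm n x) (hy : IsSignedPerm n y) (hxy : BruhatD n x y) :
    BruhatB n x y := by
  have main : ∀ v, BruhatD n x v → IsSignedPerm n v ∧ BruhatB n x v := by
    intro v hv
    induction hv with
    | refl => exact ⟨hx, Relation.ReflTransGen.refl⟩
    | @tail b c hxb hbc ih =>
      obtain ⟨hsb, hB⟩ := ih
      obtain ⟨t, hts, htD, hc, hlen⟩ := hbc
      subst hc
      exact ⟨Stmt3Aux.signed_mul n hsb hts,
        hB.tail ⟨t, hts, Or.inl htD, rfl,
          Stmt3Aux.keystep n b t hsb hts htD hlen⟩⟩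
  exact (main y hxy).2
end

section
/- Let α = (α_1 ≥ ⋯ ≥ α_l > 0) be a partition of n, let w ∈ C_α, and let 0 ≤ m ≤ n. Then w[n−m, n−m+1] ≥ min{k : α_1 + ⋯ + α_k ≥ m}. -/
/-- `w ∈ C_α` for a partition `α = (α 1 ≥ ⋯ ≥ α ℓ > 0)` of `n`: `w` is a signed
permutation of rank `n` and there is a decomposition `{1,...,n} = I_1 ⊔ ⋯ ⊔ I_ℓ`
with `|I_j| = α_j`, such that the orbits of `w` on `{±1,...,±n}` are exactly the
sets `I_j ⊔ (−I_j)`. -/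
def MemCClass (n ℓ : ℕ) (α : ℕ → ℕ) (w : Equiv.Perm ℤ) : Prop :=
  IsSignedPerm n w ∧
  ∃ I : ℕ → Finset ℤ,
    (∀ j, 1 ≤ j → j ≤ ℓ → (I j).card = α j) ∧
    (∀ j j', 1 ≤ j → j < j' → j' ≤ ℓ → Disjoint (I j) (I j')) ∧
    ((Finset.Icc 1 ℓ).biUnion I = Finset.Icc (1 : ℤ) (n : ℤ)) ∧
    (∀ j, 1 ≤ j → j ≤ ℓ →
      ∀ x ∈ I j ∪ (I j).image (fun a => -a), ∀ y : ℤ,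
        (w.SameCycle x y ↔ y ∈ I j ∪ (I j).image (fun a => -a)))

/-- Rearrangement: a sum of an antitone sequence over a subset of `[1,ℓ]` of
cardinality `r` is at most the sum over `[1,r]`. -/
lemma sum_le_sum_icc_card (ℓ : ℕ) (α : ℕ → ℕ)
    (hanti : ∀ b a, 1 ≤ a → a ≤ b → b ≤ ℓ → α b ≤ α a)
    (J : Finset ℕ) (hJ : J ⊆ Finset.Icc 1 ℓ) :
    ∑ j ∈ J, α j ≤ ∑ i ∈ Finset.Icc 1 J.card, α i := by
  classical
  have hlt : ∀ k : ℕ, ∀ i : Fin J.card, (i : ℕ) = k → k < ((J.orderIsoOfFin rfl) i : ℕ) := by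
    intro k
    induction k with
    | zero =>
      intro i _
      have h1 : (((J.orderIsoOfFin rfl) i : ℕ)) ∈ J := ((J.orderIsoOfFin rfl) i).2
      have h2 := Finset.mem_Icc.mp (hJ h1)
      omega
    | succ k ih =>
      intro i hik
      have hkr : k < J.card := by omega
      have hlt' : (⟨k, hkr⟩ : Fin J.card) < i := by
        rw [Fin.lt_def]; simp; omega
      have hc : (((J.orderIsoOfFin rfl) ⟨k, hkr⟩ : ℕ)) < (((J.orderIsoOfFin rfl) i : ℕ)) :=
        (J.orderIsoOfFin rfl).strictMono hlt'
      have hk' := ih ⟨k, hkr⟩ rfl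
      omega
  have hle : ∀ i : Fin J.card, α ((J.orderIsoOfFin rfl) i : ℕ) ≤ α ((i : ℕ) + 1) := by
    intro i
    have h1 := hlt (i : ℕ) i rfl
    have h2 : (((J.orderIsoOfFin rfl) i : ℕ)) ≤ ℓ :=
      (Finset.mem_Icc.mp (hJ ((J.orderIsoOfFin rfl) i).2)).2
    exact hanti ((J.orderIsoOfFin rfl) i : ℕ) ((i : ℕ) + 1) (by omega) (by omega) h2
  have hfin : ∀ s : ℕ, ∑ i ∈ Finset.range s, α (i + 1) = ∑ i ∈ Finset.Icc 1 s, α i := by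
    intro s
    induction s with
    | zero => simp
    | succ s ih =>
      rw [Finset.sum_range_succ, ih, Finset.sum_Icc_succ_top (Nat.succ_le_succ (Nat.zero_le s))]
  calc ∑ j ∈ J, α j = ∑ x : J, α x := (Finset.sum_coe_sort J α).symm
    _ = ∑ i : Fin J.card, α ((J.orderIsoOfFin rfl) i : ℕ) :=
        (Equiv.sum_comp (J.orderIsoOfFin rfl).toEquiv (fun x : J => α x)).symm
    _ ≤ ∑ i : Fin J.card, α ((i : ℕ) + 1) := Finset.sum_le_sum (fun i _ => hle i)
    _ = ∑ i ∈ Finset.range J.card, α (i + 1) :=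
        Fin.sum_univ_eq_sum_range (fun i => α (i + 1)) J.card
    _ = ∑ i ∈ Finset.Icc 1 J.card, α i := hfin J.card

/-- if `α = (α_1 ≥ ⋯ ≥ α_ℓ > 0)` is a partition of `n`, `w ∈ C_α`
and `0 ≤ m ≤ n`, then `w[n−m, n−m+1] ≥ min{k : α_1 + ⋯ + α_k ≥ m}`. -/
theorem stmt4 (n : ℕ) (hn : 1 ≤ n) (ℓ : ℕ) (α : ℕ → ℕ)
    (hmono : ∀ i, 1 ≤ i → i < ℓ → α (i + 1) ≤ α i)
    (hpos : ∀ i, 1 ≤ i → i ≤ ℓ → 0 < α i)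
    (hsupp : ∀ i, ℓ < i → α i = 0)
    (hsum : ∑ i ∈ Finset.Icc 1 ℓ, α i = n)
    (w : Equiv.Perm ℤ) (hw : MemCClass n ℓ α w)
    (m : ℕ) (hm : m ≤ n) :
    sInf {k : ℕ | m ≤ ∑ i ∈ Finset.Icc 1 k, α i} ≤
      entryB n w ((n : ℤ) - (m : ℤ)) ((n : ℤ) - (m : ℤ) + 1) := by
  classical
  obtain ⟨⟨hodd, hfix⟩, I, hIcard, hIdisj, hIcover, hIcyc⟩ := hw
  set T : Finset ℤ := Finset.Icc ((n : ℤ) - m + 1) (n : ℤ) with hT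
  have hTcard : T.card = m := by
    rw [hT, Int.card_Icc]
    have h : ((n : ℤ) + 1 - ((n : ℤ) - m + 1)) = (m : ℤ) := by ring
    rw [h, Int.toNat_natCast]
  have hTsub : T ⊆ Finset.Icc (1 : ℤ) (n : ℤ) :=
    Finset.Icc_subset_Icc (by omega) le_rfl
  -- key per-cycle lemma
  have key : ∀ j, 1 ≤ j → j ≤ ℓ → (I j ∩ T).Nonempty →
      ∃ k : ℤ, (k ∈ Finset.Icc (-(n : ℤ)) ((n : ℤ) - m) ∧ k ≠ 0 ∧
        (n : ℤ) - m + 1 ≤ w k) ∧ w k ∈ I j := by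
    intro j hj1 hj2 hne
    have hIj : I j ⊆ Finset.Icc (1 : ℤ) (n : ℤ) := by
      rw [← hIcover]
      exact Finset.subset_biUnion_of_mem I (Finset.mem_Icc.mpr ⟨hj1, hj2⟩)
    set Cj : Finset ℤ := I j ∪ (I j).image (fun a => -a) with hCjdef
    have hcyc : ∀ x ∈ Cj, ∀ y : ℤ, (w.SameCycle x y ↔ y ∈ Cj) := hIcyc j hj1 hj2
    have hIjCj : I j ⊆ Cj := Finset.subset_union_left
    set S : Finset ℤ := Cj ∩ T with hSdef
    have hSIj : S ⊆ I j := by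
      intro x hx
      obtain ⟨hxC, hxT⟩ := Finset.mem_inter.mp hx
      have hx1 : (1 : ℤ) ≤ x := (Finset.mem_Icc.mp (hTsub hxT)).1
      rcases Finset.mem_union.mp hxC with h | h
      · exact h
      · obtain ⟨a, ha, rfl⟩ := Finset.mem_image.mp h
        have := Finset.mem_Icc.mp (hIj ha)
        omega
    have hCjlb : ∀ x ∈ Cj, x ≠ 0 ∧ -(n : ℤ) ≤ x ∧ x ≤ n := by
      intro x hx
      rcases Finset.mem_union.mp hx with h | h
      · have := Finset.mem_Icc.mp (hIj h); omega
      · obtain ⟨a, ha, rfl⟩ := Finset.mem_image.mp h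
        have := Finset.mem_Icc.mp (hIj ha); omega
    obtain ⟨t0, ht0⟩ := hne
    have ht0S : t0 ∈ S := by
      rw [hSdef, Finset.mem_inter]
      exact ⟨hIjCj (Finset.mem_inter.mp ht0).1, (Finset.mem_inter.mp ht0).2⟩
    -- find t in S whose preimage escapes T
    have hts : ∃ t ∈ S, w.symm t ∉ T := by
      by_contra hcon
      push_neg at hcon
      have hsymmS : ∀ s ∈ S, w.symm s ∈ S := by
        intro s hs
        have hsC : s ∈ Cj := (Finset.mem_inter.mp hs).1
        have hsc : w.SameCycle s (w.symm s) := ⟨-1, by simp [Equiv.Perm.inv_def]⟩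
        have hin : w.symm s ∈ Cj := (hcyc s hsC _).mp hsc
        exact Finset.mem_inter.mpr ⟨hin, hcon s hs⟩
      have himg : S.image w.symm = S := by
        apply Finset.eq_of_subset_of_card_le
        · intro x hx
          obtain ⟨s, hs, rfl⟩ := Finset.mem_image.mp hx
          exact hsymmS s hs
        · rw [Finset.card_image_of_injective _ w.symm.injective]
      have hwS : ∀ s ∈ S, w s ∈ S := by
        intro s hs
        rw [← himg] at hs
        obtain ⟨s', hs', rfl⟩ := Finset.mem_image.mp hs
        simpa using hs'
      have hinv : ∀ z : ℤ, ∀ s ∈ S, (w ^ z) s ∈ S := by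
        intro z
        induction z using Int.induction_on with
        | zero => intro s hs; simpa using hs
        | succ i ih =>
          intro s hs
          have h1 : (w ^ ((i : ℤ) + 1)) s = (w ^ (i : ℤ)) (w s) := by
            rw [zpow_add_one]; rfl
          rw [h1]; exact ih _ (hwS s hs)
        | pred i ih =>
          intro s hs
          have h1 : (w ^ (-(i : ℤ) - 1)) s = (w ^ (-(i : ℤ))) (w.symm s) := by
            rw [zpow_sub_one]; simp [Equiv.Perm.mul_apply, Equiv.Perm.inv_def]
          rw [h1]; exact ih _ (hsymmS s hs)
      have hneg : -t0 ∈ Cj :=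
        Finset.mem_union_right _ (Finset.mem_image.mpr ⟨t0, hSIj ht0S, rfl⟩)
      have ht0C : t0 ∈ Cj := hIjCj (hSIj ht0S)
      obtain ⟨z, hz⟩ := (hcyc t0 ht0C (-t0)).mpr hneg
      have hnegS : -t0 ∈ S := hz ▸ hinv z t0 ht0S
      have h1 := (Finset.mem_Icc.mp (hIj (hSIj hnegS))).1
      have h2 := (Finset.mem_Icc.mp (hIj (hSIj ht0S))).1
      omega
    obtain ⟨t, htS, htT⟩ := hts
    have htC : t ∈ Cj := hIjCj (hSIj htS)
    have hsC : w.symm t ∈ Cj := (hcyc t htC _).mp ⟨-1, by simp [Equiv.Perm.inv_def]⟩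
    have hb := hCjlb _ hsC
    have htT' : ¬((n : ℤ) - m + 1 ≤ w.symm t ∧ w.symm t ≤ n) := by
      intro hc
      exact htT (by rw [hT]; exact Finset.mem_Icc.mpr hc)
    have htTm := Finset.mem_Icc.mp (Finset.mem_inter.mp htS).2
    refine ⟨w.symm t, ⟨?_, hb.1, ?_⟩, ?_⟩
    · rw [Finset.mem_Icc]; omega
    · rw [Equiv.apply_symm_apply]; exact htTm.1
    · rw [Equiv.apply_symm_apply]; exact hSIj htS
  -- the set of cycle indices meeting T
  set J : Finset ℕ := (Finset.Icc 1 ℓ).filter (fun j => (I j ∩ T).Nonempty) with hJdef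
  have hJsub : J ⊆ Finset.Icc 1 ℓ := Finset.filter_subset _ _
  have hTsubU : T ⊆ J.biUnion (fun j => I j ∩ T) := by
    intro t ht
    have h1 : t ∈ Finset.Icc (1 : ℤ) (n : ℤ) := hTsub ht
    rw [← hIcover] at h1
    obtain ⟨j, hj, htj⟩ := Finset.mem_biUnion.mp h1
    refine Finset.mem_biUnion.mpr ⟨j, ?_, Finset.mem_inter.mpr ⟨htj, ht⟩⟩
    exact Finset.mem_filter.mpr ⟨hj, ⟨t, Finset.mem_inter.mpr ⟨htj, ht⟩⟩⟩
  have hmJ : m ≤ ∑ j ∈ J, α j := by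
    calc m = T.card := hTcard.symm
      _ ≤ (J.biUnion (fun j => I j ∩ T)).card := Finset.card_le_card hTsubU
      _ ≤ ∑ j ∈ J, (I j ∩ T).card := Finset.card_biUnion_le
      _ ≤ ∑ j ∈ J, α j := Finset.sum_le_sum (fun j hj => by
          have hj' := Finset.mem_filter.mp hj
          have h12 := Finset.mem_Icc.mp hj'.1
          rw [← hIcard j h12.1 h12.2]
          exact Finset.card_le_card Finset.inter_subset_left)
  have hanti : ∀ b a, 1 ≤ a → a ≤ b → b ≤ ℓ → α b ≤ α a := by
    intro b
    induction b with
    | zero => intro a h1 h2 _; omega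
    | succ b ih =>
      intro a h1 h2 h3
      rcases Nat.eq_or_lt_of_le h2 with h | h
      · exact le_of_eq (congrArg α h.symm)
      · have hab : a ≤ b := by omega
        have h1b : 1 ≤ b := le_trans h1 hab
        exact le_trans (hmono b h1b (by omega)) (ih a h1 hab (by omega))
  have hrearr : ∑ j ∈ J, α j ≤ ∑ i ∈ Finset.Icc 1 J.card, α i :=
    sum_le_sum_icc_card ℓ α hanti J hJsub
  have hsInf : sInf {k : ℕ | m ≤ ∑ i ∈ Finset.Icc 1 k, α i} ≤ J.card :=
    Nat.sInf_le (le_trans hmJ hrearr)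
  have hB : J.card ≤ entryB n w ((n : ℤ) - m) ((n : ℤ) - m + 1) := by
    have H : ∀ j : ℕ, ∃ k : ℤ, j ∈ J →
        ((k ∈ Finset.Icc (-(n : ℤ)) ((n : ℤ) - m) ∧ k ≠ 0 ∧
          (n : ℤ) - m + 1 ≤ w k) ∧ w k ∈ I j) := by
      intro j
      by_cases hj : j ∈ J
      · have hj' := Finset.mem_filter.mp hj
        have h12 := Finset.mem_Icc.mp hj'.1
        obtain ⟨k, hk⟩ := key j h12.1 h12.2 hj'.2
        exact ⟨k, fun _ => hk⟩
      · exact ⟨0, fun h => absurd h hj⟩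
    choose f hf using H
    unfold entryB
    apply Finset.card_le_card_of_injOn f
    · intro j hj
      obtain ⟨⟨h1, h2, h3⟩, _⟩ := hf j hj
      exact Finset.mem_filter.mpr ⟨h1, h2, h3⟩
    · intro j hj j' hj' hff
      have hjJ : j ∈ J := Finset.mem_coe.mp hj
      have hj'J : j' ∈ J := Finset.mem_coe.mp hj'
      obtain ⟨_, h4⟩ := hf j hjJ
      obtain ⟨_, h4'⟩ := hf j' hj'J
      rw [hff] at h4
      have hj1 := Finset.mem_Icc.mp (Finset.mem_filter.mp hjJ).1
      have hj'1 := Finset.mem_Icc.mp (Finset.mem_filter.mp hj'J).1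
      by_contra hne
      rcases lt_or_gt_of_ne hne with h | h
      · exact (Finset.disjoint_left.mp (hIdisj j j' hj1.1 h hj'1.2) h4) h4'
      · exact (Finset.disjoint_left.mp (hIdisj j' j hj'1.1 h hj1.2) h4') h4
  exact le_trans hsInf hB
end

section
/- Let u be a permutation of {1,...,n}, let 1 ≤ m ≤ n−1, and set I = {1 ≤ k ≤ ⌈m/2⌉ : u(k) ≥ n−⌊m/2⌋+1} and I' = {1 ≤ k ≤ n−⌊m/2⌋ : u(k) ≥ ⌈m/2⌉+1}. If O ⊆ {1,...,n} is an orbit of u of odd cardinality and |O ∩ I| + |O ∩ I'| = |O|, then O ⊆ {⌈m/2⌉+1, ⌈m/2⌉+2, ..., n−⌊m/2⌋}. -/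
/-- let `u` be a permutation of `{1,...,n}` (encoded on `Fin n`, with
`k : Fin n` representing `k+1`), let `1 ≤ m ≤ n−1`, and set
`I = {1 ≤ k ≤ ⌈m/2⌉ : u(k) ≥ n−⌊m/2⌋+1}` and `I' = {1 ≤ k ≤ n−⌊m/2⌋ : u(k) ≥ ⌈m/2⌉+1}`.
If `O ⊆ {1,...,n}` is an orbit of `u` of odd cardinality with `|O∩I| + |O∩I'| = |O|`,
then `O ⊆ {⌈m/2⌉+1, ..., n−⌊m/2⌋}`. -/
theorem stmt7 (n : ℕ) (u : Equiv.Perm (Fin n)) (m : ℕ) (hm1 : 1 ≤ m) (hm2 : m ≤ n - 1)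
    (I I' : Finset (Fin n))
    (hI : I = Finset.univ.filter
      (fun k : Fin n => (k : ℕ) + 1 ≤ (m + 1) / 2 ∧ n - m / 2 + 1 ≤ (u k : ℕ) + 1))
    (hI' : I' = Finset.univ.filter
      (fun k : Fin n => (k : ℕ) + 1 ≤ n - m / 2 ∧ (m + 1) / 2 + 1 ≤ (u k : ℕ) + 1))
    (O : Finset (Fin n))
    (hO : ∃ a ∈ O, ∀ y : Fin n, u.SameCycle a y ↔ y ∈ O)
    (hodd : Odd O.card)
    (hcard : (O ∩ I).card + (O ∩ I').card = O.card) :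
    ∀ x ∈ O, (m + 1) / 2 + 1 ≤ (x : ℕ) + 1 ∧ (x : ℕ) + 1 ≤ n - m / 2 := by
  intro x hx
  obtain ⟨a0, ha0, hcyc⟩ := hO
  have hn : 0 < n := x.pos
  have hmn : m < n := by omega
  set a := (m + 1) / 2 with ha
  set b := m / 2 with hb
  have hab : a + b = m := by omega
  -- closure of O under u and u⁻¹
  have hclosed : ∀ y ∈ O, u y ∈ O := by
    intro y hy
    exact (hcyc (u y)).1 (((hcyc y).2 hy).trans
      (Equiv.Perm.sameCycle_apply_right.mpr (Equiv.Perm.SameCycle.refl u y)))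
  have hclosed' : ∀ y ∈ O, u⁻¹ y ∈ O := by
    intro y hy
    refine (hcyc (u⁻¹ y)).1 ?_
    have := (hcyc y).2 hy
    have h2 : u.SameCycle a0 (u (u⁻¹ y)) := by simpa using this
    exact Equiv.Perm.sameCycle_apply_right.mp h2
  have hSC : ∀ y ∈ O, ∀ z ∈ O, u.SameCycle y z := by
    intro y hy z hz
    exact ((hcyc y).2 hy).symm.trans ((hcyc z).2 hz)
  set pL : Fin n → Prop := fun k => (k : ℕ) + 1 ≤ a with hpL
  set pR : Fin n → Prop := fun k => n - b + 1 ≤ (k : ℕ) + 1 with hpR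
  -- key: cardinality transfer along u
  have keyL : (O.filter (fun k => pL (u k))).card = (O.filter pL).card := by
    apply Finset.card_nbij' (fun y => u y) (fun y => u⁻¹ y)
    · intro y hy
      simp only [Finset.mem_coe, Finset.mem_filter] at hy ⊢
      exact ⟨hclosed y hy.1, hy.2⟩
    · intro y hy
      simp only [Finset.mem_coe, Finset.mem_filter] at hy ⊢
      refine ⟨hclosed' y hy.1, ?_⟩
      simpa using hy.2
    · intro y _; simp
    · intro y _; simp
  set A := (O.filter pL).card with hA
  set B := (O.filter pR).card with hB
  set P := O.filter (fun k => pL k ∧ pR (u k)) with hP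
  set Q := O.filter (fun k => pR k ∧ pL (u k)) with hQ
  have hOI : O ∩ I = P := by
    subst hI
    ext y
    simp only [Finset.mem_inter, Finset.mem_filter, Finset.mem_univ, true_and, hP, hpL, hpR]
  have hOI' : O ∩ I' = O.filter (fun k => ¬ (pR k ∨ pL (u k))) := by
    subst hI'
    ext y
    simp only [Finset.mem_inter, Finset.mem_filter, Finset.mem_univ, true_and, hpL, hpR, not_or]
    constructor
    · rintro ⟨h1, h2, h3⟩; exact ⟨h1, by omega, by omega⟩
    · rintro ⟨h1, h2, h3⟩; exact ⟨h1, by omega, by omega⟩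
  set S := O.filter (fun k => pR k ∨ pL (u k)) with hS
  have hScard : S.card + Q.card = B + A := by
    have h1 : S = O.filter pR ∪ O.filter (fun k => pL (u k)) := by
      rw [hS, Finset.filter_or]
    have h2 : Q = O.filter pR ∩ O.filter (fun k => pL (u k)) := by
      rw [hQ, Finset.filter_and]
    rw [h1, h2, Finset.card_union_add_card_inter, keyL]
  have hI'card : (O ∩ I').card = O.card - S.card := by
    rw [hOI', Finset.filter_not, Finset.card_sdiff_of_subset (Finset.filter_subset _ _)]
  have hSle : S.card ≤ O.card := Finset.card_le_card (Finset.filter_subset _ _)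
  have hpS : P.card = S.card := by
    rw [hOI, hI'card] at hcard; omega
  have hsum : P.card + Q.card = A + B := by omega
  have hpA : P.card ≤ A := by
    apply Finset.card_le_card
    intro z hz
    simp only [hP, Finset.mem_filter] at hz ⊢
    exact ⟨hz.1, hz.2.1⟩
  have hqB : Q.card ≤ B := by
    apply Finset.card_le_card
    intro z hz
    simp only [hQ, Finset.mem_filter] at hz ⊢
    exact ⟨hz.1, hz.2.1⟩
  have hpB : P.card ≤ B := by
    apply Finset.card_le_card_of_injOn u
    · intro z hz
      simp only [hP, Finset.mem_coe, Finset.mem_filter] at hz ⊢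
      exact ⟨hclosed z hz.1, hz.2.2⟩
    · exact u.injective.injOn
  have hqA : Q.card ≤ A := by
    apply Finset.card_le_card_of_injOn u
    · intro z hz
      simp only [hQ, Finset.mem_coe, Finset.mem_filter] at hz ⊢
      exact ⟨hclosed z hz.1, hz.2.2⟩
    · exact u.injective.injOn
  have hPA : P.card = A := by omega
  have hQB : Q.card = B := by omega
  have hABeq : A = B := by omega
  have hPset : P = O.filter pL := by
    apply Finset.eq_of_subset_of_card_le
    · intro z hz
      simp only [hP, Finset.mem_filter] at hz ⊢
      exact ⟨hz.1, hz.2.1⟩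
    · omega
  have hQset : Q = O.filter pR := by
    apply Finset.eq_of_subset_of_card_le
    · intro z hz
      simp only [hQ, Finset.mem_filter] at hz ⊢
      exact ⟨hz.1, hz.2.1⟩
    · omega
  have hLmap : ∀ y ∈ O, pL y → pR (u y) := by
    intro y hy hpl
    have : y ∈ P := by rw [hPset]; simp [Finset.mem_filter, hy, hpl]
    simp only [hP, Finset.mem_filter] at this
    exact this.2.2
  have hRmap : ∀ y ∈ O, pR y → pL (u y) := by
    intro y hy hpr
    have : y ∈ Q := by rw [hQset]; simp [Finset.mem_filter, hy, hpr]
    simp only [hQ, Finset.mem_filter] at this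
    exact this.2.2
  -- suffices to show x not in L ∪ R
  suffices hgoal : ¬ (pL x ∨ pR x) by
    rw [hpL, hpR, not_or] at hgoal
    constructor
    · omega
    · have := x.isLt; omega
  intro hxLR
  set s := O.filter (fun k => pL k ∨ pR k) with hs
  have hxs : x ∈ s := by simp [hs, Finset.mem_filter, hx, hxLR]
  have hsmap : ∀ y ∈ s, u y ∈ s := by
    intro y hy
    simp only [hs, Finset.mem_filter] at hy ⊢
    refine ⟨hclosed y hy.1, ?_⟩
    rcases hy.2 with h | h
    · exact Or.inr (hLmap y hy.1 h)
    · exact Or.inl (hRmap y hy.1 h)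
  have himg : s.image u = s := by
    apply Finset.eq_of_subset_of_card_le
    · intro z hz
      simp only [Finset.mem_image] at hz
      obtain ⟨w, hw, rfl⟩ := hz
      exact hsmap w hw
    · rw [Finset.card_image_of_injective _ u.injective]
  have hsmap' : ∀ y ∈ s, u⁻¹ y ∈ s := by
    intro y hy
    rw [← himg] at hy
    simp only [Finset.mem_image] at hy
    obtain ⟨w, hw, rfl⟩ := hy
    simpa using hw
  have hzpow : ∀ i : ℤ, (u ^ i) x ∈ s := by
    intro i
    induction i using Int.induction_on with
    | zero => simpa using hxs
    | succ i ih =>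
        have h1 : (u ^ ((i : ℤ) + 1)) x = u ((u ^ (i : ℤ)) x) := by
          rw [show (i : ℤ) + 1 = 1 + i by ring, zpow_add, zpow_one, Equiv.Perm.mul_apply]
        rw [h1]
        exact hsmap _ ih
    | pred i ih =>
        have h1 : (u ^ (-(i : ℤ) - 1)) x = u⁻¹ ((u ^ (-(i : ℤ))) x) := by
          rw [show -(i : ℤ) - 1 = -1 + -i by ring, zpow_add, zpow_neg_one, Equiv.Perm.mul_apply]
        rw [h1]
        exact hsmap' _ ih
  have hOsubs : O ⊆ s := by
    intro y hy
    obtain ⟨i, hi⟩ := hSC x hx y hy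
    rw [← hi]
    exact hzpow i
  have hseqO : s = O := Finset.Subset.antisymm (Finset.filter_subset _ _) hOsubs
  -- now O splits into L and R parts, disjoint, equal size: contradiction with odd
  have hdisj : Disjoint (O.filter pL) (O.filter pR) := by
    rw [Finset.disjoint_left]
    intro z hz1 hz2
    simp only [Finset.mem_filter, hpL, hpR] at hz1 hz2
    omega
  have hcardO : O.card = A + B := by
    rw [← Finset.card_union_of_disjoint hdisj, ← Finset.filter_or, ← hs, hseqO]
  obtain ⟨c, hc⟩ := hodd
  omega
end

section
/- Let u be a permutation of {1,...,n}, let 1 ≤ m ≤ n−1, and set I = {1 ≤ k ≤ ⌈m/2⌉ : u(k) ≥ n−⌊m/2⌋+1} and I' = {1 ≤ k ≤ n−⌊m/2⌋ : u(k) ≥ ⌈m/2⌉+1}. Then for every orbit O of u on {1,...,n}: |O ∩ I| + |O ∩ I'| ≤ |O|. -/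
/-- let `u` be a permutation of `{1,...,n}` (encoded on `Fin n`, with
`k : Fin n` representing `k+1`), let `1 ≤ m ≤ n−1`, and set
`I = {1 ≤ k ≤ ⌈m/2⌉ : u(k) ≥ n−⌊m/2⌋+1}` and `I' = {1 ≤ k ≤ n−⌊m/2⌋ : u(k) ≥ ⌈m/2⌉+1}`.
Then for every orbit `O` of `u` on `{1,...,n}`: `|O∩I| + |O∩I'| ≤ |O|`. -/
theorem stmt9 (n : ℕ) (u : Equiv.Perm (Fin n)) (m : ℕ) (hm1 : 1 ≤ m) (hm2 : m ≤ n - 1)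
    (I I' : Finset (Fin n))
    (hI : I = Finset.univ.filter
      (fun k : Fin n => (k : ℕ) + 1 ≤ (m + 1) / 2 ∧ n - m / 2 + 1 ≤ (u k : ℕ) + 1))
    (hI' : I' = Finset.univ.filter
      (fun k : Fin n => (k : ℕ) + 1 ≤ n - m / 2 ∧ (m + 1) / 2 + 1 ≤ (u k : ℕ) + 1))
    (O : Finset (Fin n))
    (hO : ∃ a ∈ O, ∀ y : Fin n, u.SameCycle a y ↔ y ∈ O) :
    (O ∩ I).card + (O ∩ I').card ≤ O.card := by
  obtain ⟨a, haO, ha⟩ := hO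
  have huO : ∀ k ∈ O, u k ∈ O := by
    intro k hk
    rw [← ha] at hk ⊢
    exact hk.trans ⟨1, by simp⟩
  have key : Disjoint (O ∩ I') ((O ∩ I).image u) := by
    rw [Finset.disjoint_left]
    intro x hx hx'
    obtain ⟨k, hk, rfl⟩ := Finset.mem_image.mp hx'
    simp only [hI, hI', Finset.mem_inter, Finset.mem_filter, Finset.mem_univ,
      true_and] at hx hk
    omega
  have hsub : (O ∩ I') ∪ (O ∩ I).image u ⊆ O := by
    intro x hx
    rcases Finset.mem_union.mp hx with h | h
    · exact (Finset.mem_inter.mp h).1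
    · obtain ⟨k, hk, rfl⟩ := Finset.mem_image.mp h
      exact huO k (Finset.mem_inter.mp hk).1
  have hc := Finset.card_le_card hsub
  rw [Finset.card_union_of_disjoint key,
    Finset.card_image_of_injective _ u.injective] at hc
  omega
end

section
/- Let α = (α_1 ≥ ⋯ ≥ α_ℓ > 0) be a partition. Then: (i) ψ_α(1) = 1, and if ℓ is even then ψ_α(ℓ) = −1; (ii) for every odd k with k ≤ ℓ, Σ_{i=1}^k ψ_α(i) = 1; (iii) for every even k with k ≤ ℓ, Σ_{i=1}^k ψ_α(i) = 1 + ψ_α(k); (iv) Σ_{i=1}^ℓ ψ_α(i) = κ_ℓ, where κ_ℓ = 0 if ℓ is even and κ_ℓ = 1 if ℓ is odd. -/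
/-- Lusztig's function `ψ_α` attached to a partition `α` (given as a function
`ℕ → ℕ`, with parts `α 1 ≥ α 2 ≥ ⋯ ≥ α ℓ > 0` and `α i = 0` for `i > ℓ`):
`ψ_α(1) = 1`; for odd `i ≥ 3`, `ψ_α(i) = 1` if `α_{i−1} > α_i` and `0` otherwise;
for even `i`, `ψ_α(i) = −1` if `α_i > α_{i+1}` and `0` otherwise. -/
def psi (α : ℕ → ℕ) (i : ℕ) : ℤ :=
  if i = 1 then 1
  else if i % 2 = 1 then (if α i < α (i - 1) then 1 else 0)
  else (if α (i + 1) < α i then -1 else 0)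

lemma psi_pair (α : ℕ → ℕ) (i : ℕ) (h2 : 2 ≤ i) (he : i % 2 = 0) :
    psi α i + psi α (i + 1) = 0 := by
  have h1 : ¬ (i = 1) := by omega
  have h1' : ¬ (i + 1 = 1) := by omega
  have ho : (i + 1) % 2 = 1 := by omega
  have hho : ¬ (i % 2 = 1) := by omega
  simp only [psi, if_neg h1, if_neg h1', if_pos ho, if_neg hho,
    Nat.add_sub_cancel]
  split <;> ring

lemma psi_sum_odd (α : ℕ → ℕ) : ∀ j, ∑ i ∈ Finset.Icc 1 (2 * j + 1), psi α i = 1 := by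
  intro j
  induction j with
  | zero => simp [psi]
  | succ n ih =>
      have e : 2 * (n + 1) + 1 = (2 * n + 1) + 1 + 1 := by ring
      rw [e, Finset.sum_Icc_succ_top (by omega), Finset.sum_Icc_succ_top (by omega), ih]
      rw [show 2 * n + 1 + 1 = 2 * n + 2 from by omega]
      have := psi_pair α (2 * n + 2) (by omega) (by omega)
      omega

/-- for a partition `α = (α_1 ≥ ⋯ ≥ α_ℓ > 0)`:
(i) `ψ_α(1) = 1`, and if `ℓ` is even then `ψ_α(ℓ) = −1`;
(ii) for every odd `k ≤ ℓ`, `Σ_{i=1}^k ψ_α(i) = 1`;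
(iii) for every even `k ≤ ℓ` (with `k ≥ 1`), `Σ_{i=1}^k ψ_α(i) = 1 + ψ_α(k)`;
(iv) `Σ_{i=1}^ℓ ψ_α(i) = κ_ℓ`, where `κ_ℓ = 0` if `ℓ` is even and `1` if `ℓ` is odd. -/
theorem stmt10 (ℓ : ℕ) (hℓ : 1 ≤ ℓ) (α : ℕ → ℕ)
    (hmono : ∀ i, 1 ≤ i → i < ℓ → α (i + 1) ≤ α i)
    (hpos : ∀ i, 1 ≤ i → i ≤ ℓ → 0 < α i)
    (hsupp : ∀ i, ℓ < i → α i = 0) :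
    psi α 1 = 1 ∧
    (Even ℓ → psi α ℓ = -1) ∧
    (∀ k, k ≤ ℓ → Odd k → ∑ i ∈ Finset.Icc 1 k, psi α i = 1) ∧
    (∀ k, 1 ≤ k → k ≤ ℓ → Even k → ∑ i ∈ Finset.Icc 1 k, psi α i = 1 + psi α k) ∧
    (∑ i ∈ Finset.Icc 1 ℓ, psi α i = if Even ℓ then 0 else 1) := by
  have hOdd : ∀ k, Odd k → ∑ i ∈ Finset.Icc 1 k, psi α i = 1 := by
    intro k hk
    obtain ⟨j, hj⟩ := hk
    have : k = 2 * j + 1 := by omega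
    rw [this]; exact psi_sum_odd α j
  have hEven : ∀ k, 1 ≤ k → Even k → ∑ i ∈ Finset.Icc 1 k, psi α i = 1 + psi α k := by
    intro k h1 hk
    obtain ⟨j, hj⟩ := hk
    have hk2 : 2 ≤ k := by omega
    have e : k = (k - 1) + 1 := by omega
    rw [e, Finset.sum_Icc_succ_top (by omega), hOdd (k - 1) ⟨(k - 2) / 2, by omega⟩]
  have hlast : Even ℓ → psi α ℓ = -1 := by
    intro he
    obtain ⟨j, hj⟩ := he
    have h1 : ¬ (ℓ = 1) := by omega
    have hho : ¬ (ℓ % 2 = 1) := by omega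
    have hlt : α (ℓ + 1) < α ℓ := by
      rw [hsupp (ℓ + 1) (by omega)]; exact hpos ℓ hℓ le_rfl
    simp only [psi, if_neg h1, if_neg hho, if_pos hlt]
  refine ⟨by simp [psi], hlast, fun k _ hk => hOdd k hk, fun k h1 _ hk => hEven k h1 hk, ?_⟩
  rcases Nat.even_or_odd ℓ with he | ho
  · rw [if_pos he, hEven ℓ hℓ he, hlast he]; ring
  · rw [if_neg (Nat.not_even_iff_odd.mpr ho), hOdd ℓ ho]
end

section
/- Let α = (α_1 ≥ ⋯ ≥ α_ℓ > 0) be a partition of n in which every part α_i is even. Then the sequence α + ψ_α := (α_1 + ψ_α(1), ..., α_ℓ + ψ_α(ℓ)) is weakly decreasing with nonnegative entries summing to n + κ_ℓ, where κ_ℓ = 0 if ℓ is even and κ_ℓ = 1 if ℓ is odd; i.e., α + ψ_α is a partition of n + κ_ℓ. Moreover, writing α' = α + ψ_α: α'_1 = α_1 + 1; for each i with 2i+1 ≤ ℓ, (α'_{2i}, α'_{2i+1}) = (α_{2i}, α_{2i+1}) if α_{2i} = α_{2i+1} and (α'_{2i}, α'_{2i+1}) = (α_{2i}−1, α_{2i+1}+1)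 if α_{2i} > α_{2i+1}; and if ℓ is even, then α'_ℓ = α_ℓ − 1. -/
lemma psi_even (α : ℕ → ℕ) (i : ℕ) (h : i % 2 = 0) :
    psi α i = (if α (i + 1) < α i then -1 else 0) := by
  have h1 : i ≠ 1 := by omega
  have h2 : ¬ i % 2 = 1 := by omega
  simp [psi, h1, h2]

lemma psi_odd (α : ℕ → ℕ) (i : ℕ) (h : i % 2 = 1) (h1 : i ≠ 1) :
    psi α i = (if α i < α (i - 1) then 1 else 0) := by
  simp [psi, h1, h]

lemma psi_nonneg_odd (α : ℕ → ℕ) (i : ℕ) (h : i % 2 = 1) : 0 ≤ psi α i := by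
  by_cases h1 : i = 1
  · simp [psi, h1]
  · rw [psi_odd α i h h1]; split <;> norm_num

lemma psi_ge (α : ℕ → ℕ) (i : ℕ) : -1 ≤ psi α i := by
  unfold psi; split_ifs <;> norm_num

/-- let `α = (α_1 ≥ ⋯ ≥ α_ℓ > 0)` be a partition of `n` with all parts
even.  Then `α + ψ_α` is weakly decreasing with nonnegative entries summing to
`n + κ_ℓ` (`κ_ℓ = 0` if `ℓ` even, `1` if `ℓ` odd), i.e. it is a partition of `n + κ_ℓ`.
Moreover, writing `α' = α + ψ_α`: `α'_1 = α_1 + 1`; for `1 ≤ i` with `2i+1 ≤ ℓ`,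
`(α'_{2i}, α'_{2i+1}) = (α_{2i}, α_{2i+1})` if `α_{2i} = α_{2i+1}` and
`(α'_{2i}, α'_{2i+1}) = (α_{2i}−1, α_{2i+1}+1)` if `α_{2i} > α_{2i+1}`;
and if `ℓ` is even then `α'_ℓ = α_ℓ − 1`. -/
theorem stmt11 (n ℓ : ℕ) (hℓ : 1 ≤ ℓ) (α : ℕ → ℕ)
    (hmono : ∀ i, 1 ≤ i → i < ℓ → α (i + 1) ≤ α i)
    (hpos : ∀ i, 1 ≤ i → i ≤ ℓ → 0 < α i)
    (hsupp : ∀ i, ℓ < i → α i = 0)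
    (hsum : ∑ i ∈ Finset.Icc 1 ℓ, α i = n)
    (heven : ∀ i, 1 ≤ i → i ≤ ℓ → Even (α i)) :
    (∀ i, 1 ≤ i → i < ℓ →
      (α (i + 1) : ℤ) + psi α (i + 1) ≤ (α i : ℤ) + psi α i) ∧
    (∀ i, 1 ≤ i → i ≤ ℓ → 0 ≤ (α i : ℤ) + psi α i) ∧
    (∑ i ∈ Finset.Icc 1 ℓ, ((α i : ℤ) + psi α i) =
      (n : ℤ) + (if Even ℓ then 0 else 1)) ∧
    ((α 1 : ℤ) + psi α 1 = (α 1 : ℤ) + 1) ∧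
    (∀ i, 1 ≤ i → 2 * i + 1 ≤ ℓ →
      (α (2 * i) = α (2 * i + 1) →
        (α (2 * i) : ℤ) + psi α (2 * i) = (α (2 * i) : ℤ) ∧
        (α (2 * i + 1) : ℤ) + psi α (2 * i + 1) = (α (2 * i + 1) : ℤ)) ∧
      (α (2 * i + 1) < α (2 * i) →
        (α (2 * i) : ℤ) + psi α (2 * i) = (α (2 * i) : ℤ) - 1 ∧
        (α (2 * i + 1) : ℤ) + psi α (2 * i + 1) = (α (2 * i + 1) : ℤ) + 1)) ∧
    (Even ℓ → (α ℓ : ℤ) + psi α ℓ = (α ℓ : ℤ) - 1) := by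
  -- last term when ℓ even
  have hlast : ℓ % 2 = 0 → psi α ℓ = -1 := by
    intro h
    rw [psi_even α ℓ h, if_pos]
    rw [hsupp (ℓ + 1) (by omega)]
    exact hpos ℓ hℓ le_rfl
  refine ⟨?_, ?_, ?_, ?_, ?_, ?_⟩
  · -- monotone
    intro i h1 hlt
    rcases Nat.even_or_odd i with he | ho
    · -- i even, i+1 odd
      have hi : i % 2 = 0 := Nat.even_iff.mp he
      have hi1 : (i + 1) % 2 = 1 := by omega
      have hne : i + 1 ≠ 1 := by omega
      rw [psi_even α i hi, psi_odd α (i + 1) hi1 hne]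
      simp only [Nat.add_sub_cancel]
      by_cases h : α (i + 1) < α i
      · rw [if_pos h, if_pos h]
        obtain ⟨a, ha⟩ := heven i h1 (by omega)
        obtain ⟨b, hb⟩ := heven (i + 1) (by omega) (by omega)
        omega
      · rw [if_neg h, if_neg h]
        have := hmono i h1 hlt
        omega
    · -- i odd
      have hi : i % 2 = 1 := Nat.odd_iff.mp ho
      have h1' : 0 ≤ psi α i := psi_nonneg_odd α i hi
      have h2' : psi α (i + 1) ≤ 0 := by
        rw [psi_even α (i + 1) (by omega)]; split <;> norm_num
      have := hmono i h1 hlt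
      omega
  · -- nonneg
    intro i h1 h2
    have := psi_ge α i
    have := hpos i h1 h2
    omega
  · -- sum
    have key : ∀ m, 1 ≤ m → m ≤ ℓ →
        ∑ i ∈ Finset.Icc 1 m, psi α i = 1 + (if m % 2 = 0 then psi α m else 0) := by
      intro m
      induction m with
      | zero => omega
      | succ k ih =>
        intro _ h2
        rcases Nat.eq_zero_or_pos k with hk | hk
        · subst hk; simp [psi]
        · rw [Finset.sum_Icc_succ_top (by omega : 1 ≤ k + 1),
            ih hk (by omega)]
          rcases Nat.even_or_odd k with he | ho
          · have hk0 : k % 2 = 0 := Nat.even_iff.mp he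
            have hk1 : (k + 1) % 2 = 1 := by omega
            rw [if_pos hk0, if_neg (by omega : ¬ (k + 1) % 2 = 0)]
            rw [psi_even α k hk0, psi_odd α (k + 1) hk1 (by omega)]
            simp only [Nat.add_sub_cancel]
            split <;> ring
          · have hk1 : k % 2 = 1 := Nat.odd_iff.mp ho
            rw [if_neg (by omega : ¬ k % 2 = 0), if_pos (by omega : (k + 1) % 2 = 0)]
            ring
    rw [Finset.sum_add_distrib, key ℓ hℓ le_rfl]
    have hn : ∑ i ∈ Finset.Icc 1 ℓ, (α i : ℤ) = (n : ℤ) := by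
      rw [← hsum]; push_cast; rfl
    rw [hn]
    rcases Nat.even_or_odd ℓ with he | ho
    · rw [if_pos he, hlast (Nat.even_iff.mp he), if_pos (Nat.even_iff.mp he)]
      ring
    · have h1 : ℓ % 2 = 1 := Nat.odd_iff.mp ho
      rw [if_neg (Nat.not_even_iff_odd.mpr ho), if_neg (by omega : ¬ ℓ % 2 = 0)]
      ring
  · simp [psi]
  · -- pairs
    intro i h1 h2
    have he : (2 * i) % 2 = 0 := by omega
    have ho : (2 * i + 1) % 2 = 1 := by omega
    have hne : 2 * i + 1 ≠ 1 := by omega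
    rw [psi_even α (2 * i) he, psi_odd α (2 * i + 1) ho hne]
    simp only [Nat.add_sub_cancel]
    constructor
    · intro heq
      rw [if_neg (by omega), if_neg (by omega)]
      exact ⟨by ring, by ring⟩
    · intro hlt
      rw [if_pos hlt, if_pos hlt]
      exact ⟨by ring, by ring⟩
  · intro he
    rw [hlast (Nat.even_iff.mp he)]
    ring
end

section
/- Let α = (α_1 ≥ ⋯ ≥ α_ℓ > 0) be a partition in which every part is even. Define a sequence (δ_i*)_{i ≥ 1} by: δ_i* = α_i* + 1 if i is odd, α_i* is even, and m_α(i−1) > 0; δ_i* = α_i* − 1 if i is even, α_i* is even, and m_α(i) > 0; and δ_i* = α_i* otherwise. Then (δ_i*)_{i ≥ 1} is weakly decreasing, and the partition whose conjugate is (δ_i*)_{i ≥ 1} equals α + ψ_α := (α_1 + ψ_α(1), ..., α_ℓ + ψ_α(ℓ)). -/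
/-- The conjugate partition: `α_i* = #{j : α_j ≥ i}` (parts indexed by `1,...,ℓ`). -/
def conjPart (ℓ : ℕ) (α : ℕ → ℕ) (i : ℕ) : ℕ :=
  ((Finset.Icc 1 ℓ).filter (fun j => i ≤ α j)).card

/-- The multiplicity `m_α(k) = #{j : α_j = k}` of `k` as a part of `α`
(so `m_α(0) = 0` since all parts are positive). -/
def multPart (ℓ : ℕ) (α : ℕ → ℕ) (k : ℕ) : ℕ :=
  ((Finset.Icc 1 ℓ).filter (fun j => α j = k)).card

/-- The sequence `δ*` of Spaltenstein: `δ_i* = α_i* + 1` if `i` odd, `α_i*` even and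
`m_α(i−1) > 0`; `δ_i* = α_i* − 1` if `i` even, `α_i*` even and `m_α(i) > 0`;
`δ_i* = α_i*` otherwise. -/
def dstar (ℓ : ℕ) (α : ℕ → ℕ) (i : ℕ) : ℕ :=
  if Odd i ∧ Even (conjPart ℓ α i) ∧ 0 < multPart ℓ α (i - 1) then conjPart ℓ α i + 1
  else if Even i ∧ Even (conjPart ℓ α i) ∧ 0 < multPart ℓ α i then conjPart ℓ α i - 1
  else conjPart ℓ α i

namespace Stmt12Aux

variable {ℓ : ℕ} {α : ℕ → ℕ}

theorem conj_anti {i i' : ℕ} (h : i ≤ i') : conjPart ℓ α i' ≤ conjPart ℓ α i := by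
  apply Finset.card_le_card
  intro x hx
  simp only [Finset.mem_filter] at hx ⊢
  exact ⟨hx.1, h.trans hx.2⟩

theorem conj_le (i : ℕ) : conjPart ℓ α i ≤ ℓ :=
  le_trans (Finset.card_filter_le _ _) (by simp)

theorem alpha_anti (hmono : ∀ i, 1 ≤ i → i < ℓ → α (i + 1) ≤ α i)
    {j j' : ℕ} (h1 : 1 ≤ j) (h2 : j ≤ j') (h3 : j' ≤ ℓ) : α j' ≤ α j := by
  induction j', h2 using Nat.le_induction with
  | base => exact le_refl _
  | succ n hn ih =>
    exact le_trans (hmono n (h1.trans hn) (by omega)) (ih (by omega))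

theorem dual (hmono : ∀ i, 1 ≤ i → i < ℓ → α (i + 1) ≤ α i)
    {i j : ℕ} (h1 : 1 ≤ j) (h2 : j ≤ ℓ) :
    j ≤ conjPart ℓ α i ↔ i ≤ α j := by
  constructor
  · intro h
    by_contra hc
    push_neg at hc
    have hsub : (Finset.Icc 1 ℓ).filter (fun j' => i ≤ α j') ⊆ Finset.Icc 1 (j - 1) := by
      intro x hx
      simp only [Finset.mem_filter, Finset.mem_Icc] at hx ⊢
      refine ⟨hx.1.1, ?_⟩
      by_contra hxj
      push_neg at hxj
      have := alpha_anti hmono h1 (by omega) hx.1.2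
      omega
    have := Finset.card_le_card hsub
    simp only [Nat.card_Icc] at this
    unfold conjPart at h
    omega
  · intro h
    have hsub : Finset.Icc 1 j ⊆ (Finset.Icc 1 ℓ).filter (fun j' => i ≤ α j') := by
      intro x hx
      simp only [Finset.mem_Icc, Finset.mem_filter] at hx ⊢
      exact ⟨⟨hx.1, hx.2.trans h2⟩, h.trans (alpha_anti hmono hx.1 hx.2 h2)⟩
    have := Finset.card_le_card hsub
    simpa [Nat.card_Icc, conjPart] using this

theorem conj_eq (k : ℕ) :
    conjPart ℓ α k = conjPart ℓ α (k + 1) + multPart ℓ α k := by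
  unfold conjPart multPart
  rw [← Finset.card_union_of_disjoint]
  · congr 1
    ext x
    simp only [Finset.mem_filter, Finset.mem_union, Finset.mem_Icc]
    omega
  · rw [Finset.disjoint_left]
    intro a ha hb
    simp only [Finset.mem_filter, Finset.mem_Icc] at ha hb
    omega

theorem mult_pos_iff {k : ℕ} :
    0 < multPart ℓ α k ↔ conjPart ℓ α (k + 1) < conjPart ℓ α k := by
  have := conj_eq (ℓ := ℓ) (α := α) k
  omega

theorem mult_pos_iff' {i : ℕ} (hi : 1 ≤ i) :
    0 < multPart ℓ α (i - 1) ↔ conjPart ℓ α i < conjPart ℓ α (i - 1) := by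
  have h := mult_pos_iff (ℓ := ℓ) (α := α) (k := i - 1)
  have : i - 1 + 1 = i := by omega
  rwa [this] at h

theorem conj_odd (heven : ∀ i, 1 ≤ i → i ≤ ℓ → Even (α i)) {i : ℕ} (h : Odd i) :
    conjPart ℓ α i = conjPart ℓ α (i + 1) := by
  refine le_antisymm ?_ (conj_anti (Nat.le_succ i))
  apply Finset.card_le_card
  intro x hx
  simp only [Finset.mem_filter, Finset.mem_Icc] at hx ⊢
  refine ⟨hx.1, ?_⟩
  have he := heven x hx.1.1 hx.1.2
  rw [Nat.even_iff] at he
  rw [Nat.odd_iff] at h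
  omega

theorem dual' (hmono : ∀ i, 1 ≤ i → i < ℓ → α (i + 1) ≤ α i)
    (hsupp : ∀ i, ℓ < i → α i = 0)
    {i j : ℕ} (hi : 1 ≤ i) (h1 : 1 ≤ j) (h2 : j ≤ ℓ + 1) :
    j ≤ conjPart ℓ α i ↔ i ≤ α j := by
  rcases lt_or_ge ℓ j with h | h
  · have hj : α j = 0 := hsupp j h
    have := conj_le (ℓ := ℓ) (α := α) i
    constructor <;> intro hh <;> omega
  · exact dual hmono h1 h

theorem dstar_of_odd {i : ℕ} (h : Odd i) :
    dstar ℓ α i = if Even (conjPart ℓ α i) ∧ 0 < multPart ℓ α (i - 1)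
      then conjPart ℓ α i + 1 else conjPart ℓ α i := by
  unfold dstar
  by_cases hc : Even (conjPart ℓ α i) ∧ 0 < multPart ℓ α (i - 1)
  · rw [if_pos ⟨h, hc.1, hc.2⟩, if_pos hc]
  · rw [if_neg (by tauto), if_neg hc,
      if_neg (by rintro ⟨he, -⟩; exact (Nat.not_even_iff_odd.mpr h) he)]

theorem dstar_of_even {i : ℕ} (h : Even i) :
    dstar ℓ α i = if Even (conjPart ℓ α i) ∧ 0 < multPart ℓ α i
      then conjPart ℓ α i - 1 else conjPart ℓ α i := by
  unfold dstar
  rw [if_neg (by rintro ⟨ho, -⟩; exact (Nat.not_even_iff_odd.mpr ho) h)]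
  by_cases hc : Even (conjPart ℓ α i) ∧ 0 < multPart ℓ α i
  · rw [if_pos ⟨h, hc.1, hc.2⟩, if_pos hc]
  · rw [if_neg (by tauto), if_neg hc]

theorem le_dstar_of_odd {i : ℕ} (h : Odd i) : conjPart ℓ α i ≤ dstar ℓ α i := by
  rw [dstar_of_odd h]; split <;> omega

theorem dstar_le_of_even {i : ℕ} (h : Even i) : dstar ℓ α i ≤ conjPart ℓ α i := by
  rw [dstar_of_even h]; split <;> omega

theorem dstar_mono (heven : ∀ i, 1 ≤ i → i ≤ ℓ → Even (α i)) :
    ∀ i, 1 ≤ i → dstar ℓ α (i + 1) ≤ dstar ℓ α i := by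
  intro i hi
  rcases Nat.even_or_odd i with he | ho
  · have ho1 : Odd (i + 1) := Even.add_one he
    rw [dstar_of_even he, dstar_of_odd ho1]
    have hcc : conjPart ℓ α (i + 1) = conjPart ℓ α (i + 2) := conj_odd heven ho1
    have hle : conjPart ℓ α (i + 1) ≤ conjPart ℓ α i := conj_anti (Nat.le_succ i)
    have hm : 0 < multPart ℓ α (i + 1 - 1) ↔ conjPart ℓ α (i + 1) < conjPart ℓ α i :=
      mult_pos_iff' (by omega)
    simp only [Nat.add_sub_cancel] at hm
    split_ifs with h1 h2 h2
    · obtain ⟨he1, hm1⟩ := h1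
      obtain ⟨he2, -⟩ := h2
      have := hm.mp hm1
      rw [Nat.even_iff] at he1 he2
      omega
    · obtain ⟨he1, hm1⟩ := h1
      have := hm.mp hm1
      omega
    · obtain ⟨-, hm2⟩ := h2
      have := hm.mp hm2
      omega
    · exact hle
  · have he1 : Even (i + 1) := Odd.add_one ho
    refine (dstar_le_of_even he1).trans ?_
    rw [← conj_odd heven ho]
    exact le_dstar_of_odd ho

theorem dstar_le_ell (i : ℕ) (hi : 1 ≤ i) : dstar ℓ α i ≤ ℓ := by
  rcases Nat.even_or_odd i with he | ho
  · exact (dstar_le_of_even he).trans (conj_le i)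
  · rw [dstar_of_odd ho]
    split_ifs with h
    · have := (mult_pos_iff' hi).mp h.2
      have := conj_le (ℓ := ℓ) (α := α) (i - 1)
      omega
    · exact conj_le i

section Keys

variable (hmono : ∀ i, 1 ≤ i → i < ℓ → α (i + 1) ≤ α i)
variable (hpos : ∀ i, 1 ≤ i → i ≤ ℓ → 0 < α i)
variable (hsupp : ∀ i, ℓ < i → α i = 0)
variable (heven : ∀ i, 1 ≤ i → i ≤ ℓ → Even (α i))

include hmono heven

theorem keyJ1 (hl : 1 ≤ ℓ) :
    ∀ i, 1 ≤ i → i ≤ α 1 + 1 → 1 ≤ dstar ℓ α i := by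
  intro i hi hile
  have hα1e : (α 1) % 2 = 0 := Nat.even_iff.mp (heven 1 le_rfl hl)
  rcases Nat.even_or_odd i with he | ho
  · rw [dstar_of_even he]
    have hie : i % 2 = 0 := Nat.even_iff.mp he
    have hia : i ≤ α 1 := by omega
    have h1a : 1 ≤ conjPart ℓ α i := (dual hmono le_rfl hl).mpr hia
    split_ifs with h
    · have := Nat.even_iff.mp h.1
      omega
    · omega
  · rw [dstar_of_odd ho]
    by_cases hia : i ≤ α 1
    · have := (dual hmono le_rfl hl).mpr hia
      split <;> omega
    · have hi' : i = α 1 + 1 := by omega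
      have ha0 : conjPart ℓ α i = 0 := by
        by_contra h
        exact hia ((dual hmono le_rfl hl).mp (by omega))
      have hm : 0 < multPart ℓ α (i - 1) := by
        rw [mult_pos_iff' hi]
        have h1 : 1 ≤ conjPart ℓ α (i - 1) :=
          (dual hmono le_rfl hl).mpr (by omega)
        omega
      rw [if_pos ⟨by simp [ha0], hm⟩]
      omega

theorem keyOdd {j : ℕ} (hjodd : Odd j) (hj1 : j ≠ 1) (hjl : j ≤ ℓ) :
    ∀ i, 1 ≤ i → (j ≤ dstar ℓ α i ↔ i ≤ α j + (if α j < α (j - 1) then 1 else 0)) := by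
  intro i hi
  have hjo2 : j % 2 = 1 := Nat.odd_iff.mp hjodd
  have hj3 : 3 ≤ j := by omega
  have hdj : ∀ i', j ≤ conjPart ℓ α i' ↔ i' ≤ α j := fun i' => dual hmono (by omega) hjl
  have hdj1 : ∀ i', j - 1 ≤ conjPart ℓ α i' ↔ i' ≤ α (j - 1) :=
    fun i' => dual hmono (by omega) (by omega)
  have hαje : (α j) % 2 = 0 := Nat.even_iff.mp (heven j (by omega) hjl)
  rcases Nat.even_or_odd i with he | ho
  · rw [dstar_of_even he]
    have hie : i % 2 = 0 := Nat.even_iff.mp he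
    have h1 : (j ≤ if Even (conjPart ℓ α i) ∧ 0 < multPart ℓ α i
        then conjPart ℓ α i - 1 else conjPart ℓ α i) ↔ i ≤ α j := by
      rw [← hdj i]
      split_ifs with hC
      · have := Nat.even_iff.mp hC.1
        omega
      · rfl
    rw [h1]
    split_ifs with hE <;> omega
  · rw [dstar_of_odd ho]
    split_ifs with hB hE hE
    · -- bump up, e = 1
      obtain ⟨hae, hmm⟩ := hB
      rw [mult_pos_iff' hi] at hmm
      have haen : (conjPart ℓ α i) % 2 = 0 := Nat.even_iff.mp hae
      constructor
      · intro h
        by_cases hja : j ≤ conjPart ℓ α i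
        · have := (hdj i).mp hja
          omega
        · have h2 : i - 1 ≤ α j := (hdj (i - 1)).mp (by omega)
          omega
      · intro h
        by_cases hia : i ≤ α j
        · have := (hdj i).mpr hia
          omega
        · have hi' : i = α j + 1 := by omega
          have h2 : j - 1 ≤ conjPart ℓ α i := (hdj1 i).mpr (by omega)
          omega
    · -- bump up, e = 0 : impossible to have i = α j + 1 matter
      obtain ⟨hae, hmm⟩ := hB
      rw [mult_pos_iff' hi] at hmm
      have haen : (conjPart ℓ α i) % 2 = 0 := Nat.even_iff.mp hae
      constructor
      · intro h
        by_cases hja : j ≤ conjPart ℓ α i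
        · have := (hdj i).mp hja
          omega
        · -- conjPart i = j - 1; derive e = 1, contradiction with hE
          exfalso
          have h3 : i ≤ α (j - 1) := (hdj1 i).mp (by omega)
          have h4 : ¬ (i ≤ α j) := fun hh => hja ((hdj i).mpr hh)
          have h5 : α j ≤ α (j - 1) := alpha_anti hmono (by omega) (by omega) hjl
          omega
      · intro h
        have := (hdj i).mpr (by omega)
        omega
    · -- no bump, e = 1 : show i ≤ α j ↔ i ≤ α j + 1
      rw [hdj i]
      constructor
      · omega
      · intro h
        by_contra hc
        have hi' : i = α j + 1 := by omega
        apply hB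
        have h2 : j - 1 ≤ conjPart ℓ α i := (hdj1 i).mpr (by omega)
        have h3 : ¬ (j ≤ conjPart ℓ α i) := fun hh => (by omega : ¬ i ≤ α j) ((hdj i).mp hh)
        have ha : conjPart ℓ α i = j - 1 := by omega
        constructor
        · rw [ha, Nat.even_iff]
          omega
        · rw [mult_pos_iff' hi]
          have h4 : j ≤ conjPart ℓ α (i - 1) := (hdj (i - 1)).mpr (by omega)
          omega
    · rw [hdj i]
      omega

include hsupp hpos in
theorem keyEven {j : ℕ} (hje : Even j) (hj1 : 1 ≤ j) (hjl : j ≤ ℓ) :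
    ∀ i, 1 ≤ i → (j ≤ dstar ℓ α i ↔ i ≤ α j - (if α (j + 1) < α j then 1 else 0)) := by
  intro i hi
  have hje2 : j % 2 = 0 := Nat.even_iff.mp hje
  have hdj : ∀ i', j ≤ conjPart ℓ α i' ↔ i' ≤ α j := fun i' => dual hmono hj1 hjl
  have hdj1 : ∀ i', 1 ≤ i' → (j + 1 ≤ conjPart ℓ α i' ↔ i' ≤ α (j + 1)) :=
    fun i' hi' => dual' hmono hsupp hi' (by omega) (by omega)
  have hαje : (α j) % 2 = 0 := Nat.even_iff.mp (heven j hj1 hjl)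
  have hαjp : 0 < α j := hpos j hj1 hjl
  have hstep : α (j + 1) ≤ α j := by
    rcases eq_or_lt_of_le hjl with rfl | h
    · rw [hsupp (j + 1) (by omega)]
      omega
    · exact hmono j hj1 h
  rcases Nat.even_or_odd i with he | ho
  · -- even i
    rw [dstar_of_even he]
    have hie : i % 2 = 0 := Nat.even_iff.mp he
    split_ifs with hB hE hE
    · -- bump down, e = 1
      obtain ⟨hae, hmp⟩ := hB
      rw [mult_pos_iff] at hmp
      have haen : (conjPart ℓ α i) % 2 = 0 := Nat.even_iff.mp hae
      have hiff : j ≤ conjPart ℓ α i - 1 ↔ i ≤ α (j + 1) := by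
        rw [← hdj1 i hi]
        omega
      rw [hiff]
      constructor
      · intro h
        omega
      · intro h
        by_contra hc
        push_neg at hc
        have h5 : j ≤ conjPart ℓ α i := (hdj i).mpr (by omega)
        have h6 : ¬ (j + 1 ≤ conjPart ℓ α i) := fun hh => by
          have := (hdj1 i hi).mp hh
          omega
        have h8 : ¬ (i + 1 ≤ α j) := fun hh => by
          have := (hdj (i + 1)).mpr hh
          omega
        omega
    · -- bump down, e = 0 : α (j+1) = α j
      obtain ⟨hae, hmp⟩ := hB
      rw [mult_pos_iff] at hmp
      have hq : α (j + 1) = α j := by omega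
      have hiff : j ≤ conjPart ℓ α i - 1 ↔ i ≤ α (j + 1) := by
        rw [← hdj1 i hi]
        have := Nat.even_iff.mp hae
        omega
      rw [hiff, hq]
      omega
    · -- no bump, e = 1
      rw [hdj i]
      constructor
      · intro h
        by_contra hc
        have hi' : i = α j := by omega
        apply hB
        have h5 : j ≤ conjPart ℓ α i := (hdj i).mpr h
        have h6 : ¬ (j + 1 ≤ conjPart ℓ α i) := fun hh => by
          have := (hdj1 i hi).mp hh
          omega
        have ha : conjPart ℓ α i = j := by omega
        refine ⟨by rw [ha]; exact hje, ?_⟩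
        rw [mult_pos_iff]
        have h8 : ¬ (j ≤ conjPart ℓ α (i + 1)) := fun hh => by
          have := (hdj (i + 1)).mp hh
          omega
        omega
      · omega
    · rw [hdj i]
      omega
  · -- odd i
    rw [dstar_of_odd ho]
    have hio : i % 2 = 1 := Nat.odd_iff.mp ho
    have h1 : (j ≤ if Even (conjPart ℓ α i) ∧ 0 < multPart ℓ α (i - 1)
        then conjPart ℓ α i + 1 else conjPart ℓ α i) ↔ i ≤ α j := by
      rw [← hdj i]
      split_ifs with hC
      · have := Nat.even_iff.mp hC.1
        omega
      · rfl
    rw [h1]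
    split_ifs with hE <;> omega

end Keys

end Stmt12Aux

/-- let `α = (α_1 ≥ ⋯ ≥ α_ℓ > 0)` be a partition with all parts even.
Then `(δ_i*)_{i ≥ 1}` is weakly decreasing, and the partition whose conjugate is
`(δ_i*)_{i ≥ 1}` is `α + ψ_α`: its `j`-th part `#{i ≥ 1 : δ_i* ≥ j}` equals
`α_j + ψ_α(j)` for `1 ≤ j ≤ ℓ` and `0` for `j > ℓ`.  (Since `δ_i* = 0` for
`i > α_1 + 1`, the counts are taken over `1 ≤ i ≤ α_1 + 1`.) -/
theorem stmt12 (ℓ : ℕ) (α : ℕ → ℕ)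
    (hmono : ∀ i, 1 ≤ i → i < ℓ → α (i + 1) ≤ α i)
    (hpos : ∀ i, 1 ≤ i → i ≤ ℓ → 0 < α i)
    (hsupp : ∀ i, ℓ < i → α i = 0)
    (heven : ∀ i, 1 ≤ i → i ≤ ℓ → Even (α i)) :
    (∀ i, 1 ≤ i → dstar ℓ α (i + 1) ≤ dstar ℓ α i) ∧
    (∀ j, 1 ≤ j → j ≤ ℓ →
      ((((Finset.Icc 1 (α 1 + 1)).filter (fun i => j ≤ dstar ℓ α i)).card : ℤ) =
        (α j : ℤ) + psi α j)) ∧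
    (∀ j, ℓ < j →
      ((Finset.Icc 1 (α 1 + 1)).filter (fun i => j ≤ dstar ℓ α i)).card = 0) := by

  refine ⟨Stmt12Aux.dstar_mono heven, ?_, ?_⟩
  · intro j hj1 hjl
    have hl : 1 ≤ ℓ := hj1.trans hjl
    have hαj1 : α j ≤ α 1 := Stmt12Aux.alpha_anti hmono le_rfl hj1 hjl
    have hαjp : 0 < α j := hpos j hj1 hjl
    by_cases hj : j = 1
    · subst hj
      have hfil : (Finset.Icc 1 (α 1 + 1)).filter (fun i => 1 ≤ dstar ℓ α i) =
          Finset.Icc 1 (α 1 + 1) := by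
        apply Finset.filter_true_of_mem
        intro x hx
        simp only [Finset.mem_Icc] at hx
        exact Stmt12Aux.keyJ1 hmono heven hl x hx.1 hx.2
      rw [hfil, Nat.card_Icc]
      have hpsi : psi α 1 = 1 := by simp [psi]
      rw [hpsi]
      push_cast
      ring
    · rcases Nat.even_or_odd j with hje | hjo
      · -- even j
        set e : ℕ := if α (j + 1) < α j then 1 else 0 with he
        have hkey := Stmt12Aux.keyEven hmono hpos hsupp heven hje hj1 hjl
        have hfil : (Finset.Icc 1 (α 1 + 1)).filter (fun i => j ≤ dstar ℓ α i) =
            Finset.Icc 1 (α j - e) := by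
          ext x
          simp only [Finset.mem_filter, Finset.mem_Icc]
          constructor
          · rintro ⟨⟨h1, h2⟩, h3⟩
            exact ⟨h1, (hkey x h1).mp h3⟩
          · rintro ⟨h1, h2⟩
            refine ⟨⟨h1, ?_⟩, (hkey x h1).mpr h2⟩
            have : e ≤ 1 := by rw [he]; split <;> omega
            omega
        rw [hfil, Nat.card_Icc]
        have hpsi : psi α j = if α (j + 1) < α j then -1 else 0 := by
          rw [psi, if_neg hj, if_neg (by rw [Nat.even_iff] at hje; omega)]
        rw [hpsi, he]
        split_ifs <;> push_cast <;> omega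
      · -- odd j, j ≠ 1
        set e : ℕ := if α j < α (j - 1) then 1 else 0 with he
        have hkey := Stmt12Aux.keyOdd hmono heven hjo hj hjl
        have hfil : (Finset.Icc 1 (α 1 + 1)).filter (fun i => j ≤ dstar ℓ α i) =
            Finset.Icc 1 (α j + e) := by
          ext x
          simp only [Finset.mem_filter, Finset.mem_Icc]
          constructor
          · rintro ⟨⟨h1, h2⟩, h3⟩
            exact ⟨h1, (hkey x h1).mp h3⟩
          · rintro ⟨h1, h2⟩
            refine ⟨⟨h1, ?_⟩, (hkey x h1).mpr h2⟩
            have he1 : e ≤ 1 := by rw [he]; split <;> omega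
            -- need α j + e ≤ α 1 + 1
            omega
        rw [hfil, Nat.card_Icc]
        have hpsi : psi α j = if α j < α (j - 1) then 1 else 0 := by
          rw [psi, if_neg hj, if_pos (Nat.odd_iff.mp hjo)]
        rw [hpsi, he]
        split_ifs <;> push_cast <;> omega
  · intro j hj
    rw [Finset.card_eq_zero, Finset.filter_eq_empty_iff]
    intro x hx
    simp only [Finset.mem_Icc] at hx
    have := Stmt12Aux.dstar_le_ell (ℓ := ℓ) (α := α) x hx.1
    omega
end

section
/- Let α = (α_1 ≥ ⋯ ≥ α_ℓ > 0) be a partition in which every part is even. Then the map i ↦ α_i* + 1 is a bijection from the set {i ≥ 1 : i odd, α_i* even, m_α(i−1) > 0} onto the set {j : 1 ≤ j ≤ ℓ, j odd, and (j = 1 or α_{j−1} > α_j)}, with inverse given by j ↦ α_j + 1. -/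
/-- let `α = (α_1 ≥ ⋯ ≥ α_ℓ > 0)` be a partition with all parts even.
Then `i ↦ α_i* + 1` is a bijection from
`{i ≥ 1 : i odd, α_i* even, m_α(i−1) > 0}` onto
`{j : 1 ≤ j ≤ ℓ, j odd, (j = 1 or α_{j−1} > α_j)}`, with inverse `j ↦ α_j + 1`. -/
theorem stmt13 (ℓ : ℕ) (α : ℕ → ℕ)
    (hmono : ∀ i, 1 ≤ i → i < ℓ → α (i + 1) ≤ α i)
    (hpos : ∀ i, 1 ≤ i → i ≤ ℓ → 0 < α i)
    (hsupp : ∀ i, ℓ < i → α i = 0)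
    (heven : ∀ i, 1 ≤ i → i ≤ ℓ → Even (α i)) :
    Set.BijOn (fun i => conjPart ℓ α i + 1)
      {i : ℕ | 1 ≤ i ∧ Odd i ∧ Even (conjPart ℓ α i) ∧ 0 < multPart ℓ α (i - 1)}
      {j : ℕ | 1 ≤ j ∧ j ≤ ℓ ∧ Odd j ∧ (j = 1 ∨ α j < α (j - 1))} ∧
    Set.InvOn (fun j => α j + 1) (fun i => conjPart ℓ α i + 1)
      {i : ℕ | 1 ≤ i ∧ Odd i ∧ Even (conjPart ℓ α i) ∧ 0 < multPart ℓ α (i - 1)}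
      {j : ℕ | 1 ≤ j ∧ j ≤ ℓ ∧ Odd j ∧ (j = 1 ∨ α j < α (j - 1))} := by
  -- monotonicity on the whole range
  have hmono2 : ∀ a b, 1 ≤ a → a ≤ b → b ≤ ℓ → α b ≤ α a := by
    intro a b ha hab hbl
    induction b with
    | zero => omega
    | succ n ih =>
      rcases Nat.lt_or_ge a (n + 1) with h | h
      · exact le_trans (hmono n (by omega) (by omega)) (ih (by omega) (by omega))
      · have : a = n + 1 := by omega
        simp [this]
  -- structure of the filter defining the conjugate
  have hstruct : ∀ i, (Finset.Icc 1 ℓ).filter (fun j => i ≤ α j)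
      = Finset.Icc 1 (conjPart ℓ α i) := by
    intro i
    set S := (Finset.Icc 1 ℓ).filter (fun j => i ≤ α j) with hS
    by_cases hne : S.Nonempty
    · set c := S.max' hne with hc
      have hcS : c ∈ S := S.max'_mem hne
      have hcl : 1 ≤ c ∧ c ≤ ℓ ∧ i ≤ α c := by
        have := hcS
        simp only [hS, Finset.mem_filter, Finset.mem_Icc] at this
        tauto
      have hSeq : S = Finset.Icc 1 c := by
        ext j
        simp only [hS, Finset.mem_filter, Finset.mem_Icc]
        constructor
        · rintro ⟨⟨h1, h2⟩, h3⟩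
          refine ⟨h1, S.le_max' j ?_⟩
          simp only [hS, Finset.mem_filter, Finset.mem_Icc]
          tauto
        · rintro ⟨h1, h2⟩
          have hj : α c ≤ α j := hmono2 j c h1 h2 hcl.2.1
          exact ⟨⟨h1, le_trans h2 hcl.2.1⟩, le_trans hcl.2.2 hj⟩
      have hcc : conjPart ℓ α i = c := by
        rw [conjPart, ← hS, hSeq, Nat.card_Icc]
        omega
      rw [hSeq, hcc]
    · rw [Finset.not_nonempty_iff_eq_empty] at hne
      have hcc : conjPart ℓ α i = 0 := by
        rw [conjPart, ← hS, hne]; simp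
      rw [hne, hcc]
      simp
  have hmem : ∀ i j, (1 ≤ j ∧ j ≤ conjPart ℓ α i) ↔ (1 ≤ j ∧ j ≤ ℓ ∧ i ≤ α j) := by
    intro i j
    have h2 := Finset.ext_iff.mp (hstruct i) j
    simp only [Finset.mem_filter, Finset.mem_Icc] at h2
    tauto
  -- facts for elements of the domain
  have hA : ∀ i, 1 ≤ i → 0 < multPart ℓ α (i - 1) →
      conjPart ℓ α i + 1 ≤ ℓ ∧ α (conjPart ℓ α i + 1) = i - 1 ∧
      (conjPart ℓ α i = 0 ∨ α (conjPart ℓ α i + 1) < α (conjPart ℓ α i)) := by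
    intro i hi1 hm
    have hm' : 0 < ((Finset.Icc 1 ℓ).filter (fun j => α j = i - 1)).card := hm
    obtain ⟨t, ht⟩ := Finset.card_pos.mp hm'
    simp only [Finset.mem_filter, Finset.mem_Icc] at ht
    obtain ⟨⟨ht1, htl⟩, hta⟩ := ht
    have htc : ¬ (1 ≤ t ∧ t ≤ conjPart ℓ α i) := by
      rw [hmem]; omega
    have hct : conjPart ℓ α i < t := by omega
    have hcl : conjPart ℓ α i + 1 ≤ ℓ := by omega
    have hlt : α (conjPart ℓ α i + 1) < i := by
      have := (hmem i (conjPart ℓ α i + 1)).not.mp (by omega)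
      omega
    have hge : α t ≤ α (conjPart ℓ α i + 1) := hmono2 _ t (by omega) (by omega) htl
    have heq : α (conjPart ℓ α i + 1) = i - 1 := by omega
    refine ⟨hcl, heq, ?_⟩
    rcases Nat.eq_zero_or_pos (conjPart ℓ α i) with h0 | h0
    · exact Or.inl h0
    · right
      have : 1 ≤ conjPart ℓ α i ∧ conjPart ℓ α i ≤ ℓ ∧ i ≤ α (conjPart ℓ α i) :=
        (hmem i _).mp ⟨h0, le_refl _⟩
      omega
  -- facts for elements of the codomain
  have hB : ∀ j, 1 ≤ j → j ≤ ℓ → (j = 1 ∨ α j < α (j - 1)) →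
      conjPart ℓ α (α j + 1) = j - 1 := by
    intro j h1 hl hcond
    have hub : conjPart ℓ α (α j + 1) < j := by
      by_contra h
      push_neg at h
      have := (hmem (α j + 1) j).mp ⟨h1, h⟩
      omega
    rcases Nat.eq_or_lt_of_le h1 with h1' | h1'
    · omega
    · have hlb : j - 1 ≤ conjPart ℓ α (α j + 1) := by
        have hcond' : α j < α (j - 1) := by
          rcases hcond with h | h
          · omega
          · exact h
        have := (hmem (α j + 1) (j - 1)).mpr ⟨by omega, by omega, by omega⟩
        omega
      omega
  refine ?_
  have hAB : Set.MapsTo (fun i => conjPart ℓ α i + 1)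
      {i : ℕ | 1 ≤ i ∧ Odd i ∧ Even (conjPart ℓ α i) ∧ 0 < multPart ℓ α (i - 1)}
      {j : ℕ | 1 ≤ j ∧ j ≤ ℓ ∧ Odd j ∧ (j = 1 ∨ α j < α (j - 1))} := by
    rintro i ⟨hi1, hiodd, hiev, him⟩
    obtain ⟨hcl, heq, hcond⟩ := hA i hi1 him
    simp only [Set.mem_setOf_eq]
    refine ⟨by omega, hcl, hiev.add_one, ?_⟩
    rcases hcond with h0 | hlt
    · exact Or.inl (by omega)
    · right
      simpa using hlt
  have hBA : Set.MapsTo (fun j => α j + 1)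
      {j : ℕ | 1 ≤ j ∧ j ≤ ℓ ∧ Odd j ∧ (j = 1 ∨ α j < α (j - 1))}
      {i : ℕ | 1 ≤ i ∧ Odd i ∧ Even (conjPart ℓ α i) ∧ 0 < multPart ℓ α (i - 1)} := by
    rintro j ⟨h1, hl, hodd, hcond⟩
    have hcj := hB j h1 hl hcond
    simp only [Set.mem_setOf_eq]
    refine ⟨by omega, (heven j h1 hl).add_one, ?_, ?_⟩
    · rw [hcj]
      exact Nat.Odd.sub_odd hodd odd_one
    · have : (α j + 1) - 1 = α j := by omega
      rw [this]
      refine Finset.card_pos.mpr ⟨j, ?_⟩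
      rw [Finset.mem_filter, Finset.mem_Icc]
      exact ⟨⟨h1, hl⟩, rfl⟩
  have hleft : Set.LeftInvOn (fun j => α j + 1) (fun i => conjPart ℓ α i + 1)
      {i : ℕ | 1 ≤ i ∧ Odd i ∧ Even (conjPart ℓ α i) ∧ 0 < multPart ℓ α (i - 1)} := by
    rintro i ⟨hi1, hiodd, hiev, him⟩
    obtain ⟨hcl, heq, hcond⟩ := hA i hi1 him
    simp only
    omega
  have hright : Set.RightInvOn (fun j => α j + 1) (fun i => conjPart ℓ α i + 1)
      {j : ℕ | 1 ≤ j ∧ j ≤ ℓ ∧ Odd j ∧ (j = 1 ∨ α j < α (j - 1))} := by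
    rintro j ⟨h1, hl, hodd, hcond⟩
    have hcj := hB j h1 hl hcond
    simp only [hcj]
    omega
  exact ⟨Set.InvOn.bijOn ⟨hleft, hright⟩ hAB hBA, hleft, hright⟩
end

section
/- Let α = (α_1 ≥ ⋯ ≥ α_ℓ > 0) be a partition in which every part is even. Then the map i ↦ α_i* is a bijection from the set {i ≥ 1 : i even, α_i* even, m_α(i) > 0} onto the set {j : 1 ≤ j ≤ ℓ, j even, α_j > α_{j+1}} (with the convention α_{ℓ+1} = 0), with inverse given by j ↦ α_j. -/
/-- let `α = (α_1 ≥ ⋯ ≥ α_ℓ > 0)` be a partition with all parts even.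
Then `i ↦ α_i*` is a bijection from `{i ≥ 1 : i even, α_i* even, m_α(i) > 0}` onto
`{j : 1 ≤ j ≤ ℓ, j even, α_j > α_{j+1}}` (convention `α_{ℓ+1} = 0`), with inverse
`j ↦ α_j`. -/
theorem stmt14 (ℓ : ℕ) (α : ℕ → ℕ)
    (hmono : ∀ i, 1 ≤ i → i < ℓ → α (i + 1) ≤ α i)
    (hpos : ∀ i, 1 ≤ i → i ≤ ℓ → 0 < α i)
    (hsupp : ∀ i, ℓ < i → α i = 0)
    (heven : ∀ i, 1 ≤ i → i ≤ ℓ → Even (α i)) :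
    Set.BijOn (fun i => conjPart ℓ α i)
      {i : ℕ | 1 ≤ i ∧ Even i ∧ Even (conjPart ℓ α i) ∧ 0 < multPart ℓ α i}
      {j : ℕ | 1 ≤ j ∧ j ≤ ℓ ∧ Even j ∧ α (j + 1) < α j} ∧
    Set.InvOn (fun j => α j) (fun i => conjPart ℓ α i)
      {i : ℕ | 1 ≤ i ∧ Even i ∧ Even (conjPart ℓ α i) ∧ 0 < multPart ℓ α i}
      {j : ℕ | 1 ≤ j ∧ j ≤ ℓ ∧ Even j ∧ α (j + 1) < α j} := by
  -- antitonicity of α on [1, ∞)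
  have hanti : ∀ j j', 1 ≤ j → j ≤ j' → α j' ≤ α j := by
    intro j j' h1 hle
    induction j', hle using Nat.le_induction with
    | base => exact le_refl _
    | succ k hk ih =>
      refine le_trans ?_ ih
      by_cases hkℓ : k < ℓ
      · exact hmono k (h1.trans hk) hkℓ
      · rw [hsupp (k + 1) (by omega)]; exact Nat.zero_le _
  -- key computation of conjPart
  have hconj : ∀ j i, 1 ≤ j → j ≤ ℓ → α (j + 1) < i → i ≤ α j → conjPart ℓ α i = j := by
    intro j i h1 hjℓ hlt hle
    unfold conjPart
    have hset : (Finset.Icc 1 ℓ).filter (fun k => i ≤ α k) = Finset.Icc 1 j := by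
      ext k
      simp only [Finset.mem_filter, Finset.mem_Icc]
      constructor
      · rintro ⟨⟨hk1, hkℓ⟩, hik⟩
        refine ⟨hk1, ?_⟩
        by_contra h
        push_neg at h
        have : α k ≤ α (j + 1) := hanti (j + 1) k (by omega) (by omega)
        omega
      · rintro ⟨hk1, hkj⟩
        exact ⟨⟨hk1, hkj.trans hjℓ⟩, hle.trans (hanti k j hk1 hkj)⟩
    rw [hset, Nat.card_Icc]
    omega
  -- main structure for i in the source
  have main : ∀ i, 1 ≤ i → 0 < multPart ℓ α i →
      α (conjPart ℓ α i) = i ∧ 1 ≤ conjPart ℓ α i ∧ conjPart ℓ α i ≤ ℓ ∧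
      α (conjPart ℓ α i + 1) < α (conjPart ℓ α i) := by
    intro i hi1 hm
    have hne : ((Finset.Icc 1 ℓ).filter (fun j => α j = i)).Nonempty :=
      Finset.card_pos.mp hm
    obtain ⟨j0, hj0⟩ := hne
    simp only [Finset.mem_filter, Finset.mem_Icc] at hj0
    obtain ⟨⟨hj01, hj0ℓ⟩, hj0i⟩ := hj0
    set S := (Finset.Icc 1 ℓ).filter (fun k => i ≤ α k) with hS
    have hj0S : j0 ∈ S := by
      simp only [hS, Finset.mem_filter, Finset.mem_Icc]
      exact ⟨⟨hj01, hj0ℓ⟩, hj0i.ge⟩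
    have hSne : S.Nonempty := ⟨j0, hj0S⟩
    set j := S.max' hSne with hj
    have hjS : j ∈ S := S.max'_mem hSne
    simp only [hS, Finset.mem_filter, Finset.mem_Icc] at hjS
    obtain ⟨⟨hj1, hjℓ⟩, hij⟩ := hjS
    have hlt : α (j + 1) < i := by
      by_contra h
      push_neg at h
      have hj1ℓ : j + 1 ≤ ℓ := by
        by_contra h2
        have := hsupp (j + 1) (by omega)
        omega
      have : j + 1 ∈ S := by
        simp only [hS, Finset.mem_filter, Finset.mem_Icc]
        exact ⟨⟨by omega, hj1ℓ⟩, h⟩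
      have := S.le_max' _ this
      omega
    have hαj : α j = i := by
      have h1 : j0 ≤ j := S.le_max' _ hj0S
      have : α j ≤ α j0 := hanti j0 j hj01 h1
      omega
    have hcj : conjPart ℓ α i = j := hconj j i hj1 hjℓ hlt (hαj.ge)
    rw [hcj]
    exact ⟨hαj, hj1, hjℓ, by omega⟩
  -- right inverse: conjPart (α j) = j for j in the target
  have hright : ∀ j, 1 ≤ j → j ≤ ℓ → α (j + 1) < α j → conjPart ℓ α (α j) = j := by
    intro j h1 hℓ hlt
    exact hconj j (α j) h1 hℓ hlt le_rfl
  have hmapsto : Set.MapsTo (fun i => conjPart ℓ α i)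
      {i : ℕ | 1 ≤ i ∧ Even i ∧ Even (conjPart ℓ α i) ∧ 0 < multPart ℓ α i}
      {j : ℕ | 1 ≤ j ∧ j ≤ ℓ ∧ Even j ∧ α (j + 1) < α j} := by
    rintro i ⟨hi1, _, hce, hm⟩
    obtain ⟨h1, h2, h3, h4⟩ := main i hi1 hm
    exact ⟨h2, h3, hce, h4⟩
  have hmapsto' : Set.MapsTo (fun j => α j)
      {j : ℕ | 1 ≤ j ∧ j ≤ ℓ ∧ Even j ∧ α (j + 1) < α j}
      {i : ℕ | 1 ≤ i ∧ Even i ∧ Even (conjPart ℓ α i) ∧ 0 < multPart ℓ α i} := by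
    rintro j ⟨h1, h2, h3, h4⟩
    refine ⟨hpos j h1 h2, heven j h1 h2, ?_, ?_⟩
    · rw [hright j h1 h2 h4]; exact h3
    · apply Finset.card_pos.mpr
      exact ⟨j, Finset.mem_filter.mpr ⟨Finset.mem_Icc.mpr ⟨h1, h2⟩, rfl⟩⟩
  have hinv : Set.InvOn (fun j => α j) (fun i => conjPart ℓ α i)
      {i : ℕ | 1 ≤ i ∧ Even i ∧ Even (conjPart ℓ α i) ∧ 0 < multPart ℓ α i}
      {j : ℕ | 1 ≤ j ∧ j ≤ ℓ ∧ Even j ∧ α (j + 1) < α j} := by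
    constructor
    · rintro i ⟨hi1, _, _, hm⟩
      exact (main i hi1 hm).1
    · rintro j ⟨h1, h2, _, h4⟩
      exact hright j h1 h2 h4
  exact ⟨hinv.bijOn hmapsto hmapsto', hinv⟩
end
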